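/- arXiv:1606.01274 — 6 statements merged into one kernel-verified Lean document; each statement's English description precedes it below -/
import Mathlib

section
/- Let z be a ≺_0-Lyndon binary word, let z'1 be a prefix of z (z' a word followed by the letter 1), let k ≥ 1, and let u be an arbitrary binary word. Then z is the longest prefix of the word z^k z' 0 u that is a ≺_0-Lyndon word; that is, every prefix of z^k z' 0 u strictly longer than z fails to be ≺_0-Lyndon, while z itself is a ≺_0-Lyndon prefix. -/
/-- The factor `w[i..j]` of `w`, with 1-based inclusive indices. -/
def factor (w : List Bool) (i j : ℕ) : List Bool :=
  (w.drop (i - 1)).take (j + 1 - i)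

/-- `p` is a period of `w` (1-based: `w[k+p] = w[k]` for `1 ≤ k ≤ |w| - p`). -/
def IsPeriod (w : List Bool) (p : ℕ) : Prop :=
  1 ≤ p ∧ ∀ k, k + p < w.length → w[k]? = w[k + p]?

/-- The least period of `w`. -/
noncomputable def leastPeriod (w : List Bool) : ℕ := sInf {p | IsPeriod w p}

/-- `p` is the least period of `w`. -/
def IsLeastPeriod (w : List Bool) (p : ℕ) : Prop :=
  IsPeriod w p ∧ ∀ q, IsPeriod w q → p ≤ q

/-- The lexicographic order `≺_c` on binary words in which the letter `c` is smaller. -/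
def LexLt (c : Bool) : List Bool → List Bool → Prop :=
  List.Lex (fun a b => a = c ∧ b = !c)

/-- `w` is a `≺_c`-Lyndon word. -/
def IsLyndon (c : Bool) (w : List Bool) : Prop :=
  w ≠ [] ∧ ∀ u v : List Bool, u ≠ [] → v ≠ [] → w = u ++ v →
    w ≠ v ++ u ∧ LexLt c w (v ++ u)

/-- `w` is primitive: it is not a power of a shorter word. -/
def Primitive (w : List Bool) : Prop :=
  w ≠ [] ∧ ∀ (u : List Bool) (k : ℕ), u.length < w.length → w ≠ (List.replicate k u).flatten

/-- `w` and `w'` are conjugate words. -/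
def Conjugate (w w' : List Bool) : Prop := ∃ u v, w = u ++ v ∧ w' = v ++ u

/-- The interval `[i..j]` (1-based) is a run of `w`. -/
def IsRun (w : List Bool) (i j : ℕ) : Prop :=
  1 ≤ i ∧ i < j ∧ j ≤ w.length ∧
  2 * leastPeriod (factor w i j) ≤ j - i + 1 ∧
  (i = 1 ∨ w[i - 2]? ≠ w[i - 2 + leastPeriod (factor w i j)]?) ∧
  (j = w.length ∨ w[j]? ≠ w[j - leastPeriod (factor w i j)]?)

/-- `c_w(i)`: the letter different from `w[i-1]` (1-based). -/
def cpar (w : List Bool) (i : ℕ) : Bool := !(w.getD (i - 2) false)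

/-- `L_w(i)`: the largest `j` such that `w[i..j]` is `≺_{c_w(i)}`-Lyndon. -/
noncomputable def Lpar (w : List Bool) (i : ℕ) : ℕ :=
  sSup {j | j ≤ w.length ∧ IsLyndon (cpar w i) (factor w i j)}

/-- `D_w(i) = L_w(i) - i + 1`. -/
noncomputable def Dpar (w : List Bool) (i : ℕ) : ℕ := Lpar w i + 1 - i

/-- `ST_w(i)`: the least `j` such that `D_w(i)` is a period of `w[j..L_w(i)]`. -/
noncomputable def STpar (w : List Bool) (i : ℕ) : ℕ :=
  sInf {j | 1 ≤ j ∧ IsPeriod (factor w j (Lpar w i)) (Dpar w i)}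

/-- `E_w(i)`: the largest `j` such that `D_w(i)` is a period of `w[i..j]`. -/
noncomputable def Epar (w : List Bool) (i : ℕ) : ℕ :=
  sSup {j | j ≤ w.length ∧ IsPeriod (factor w i j) (Dpar w i)}

/-- `R_w(i) = [ST_w(i)..E_w(i)]`. -/
noncomputable def Rmap (w : List Bool) (i : ℕ) : ℕ × ℕ := (STpar w i, Epar w i)

/-- `r_w(c)` for the run `[s..e]`: the least `i` with `R_w(i) = [s..e]` and
`w[i..L_w(i)]` a `≺_c`-Lyndon word. -/
noncomputable def rpar (w : List Bool) (s e : ℕ) (c : Bool) : ℕ :=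
  sInf {i | Rmap w i = (s, e) ∧ IsLyndon c (factor w i (Lpar w i))}

/-- `f_w([s..e])`: the letter `c` with `r_w(c) ≥ r_w(c̄)` (`0` if the least period is one). -/
noncomputable def fpar (w : List Bool) (s e : ℕ) : Bool :=
  if leastPeriod (factor w s e) = 1 then false
  else if rpar w s e false ≤ rpar w s e true then true else false

/-- The position `i` (1-based, `1 < i ≤ |w|`) is lost in `w`. -/
def Lost (w : List Bool) (i : ℕ) : Prop :=
  1 < i ∧ i ≤ w.length ∧
  ((Epar w i < w.length ∧ 1 < STpar w i ∧ ¬ IsRun w (STpar w i) (Epar w i)) ∨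
   (Epar w i < w.length ∧ IsRun w (STpar w i) (Epar w i) ∧ i + Dpar w i ≤ Epar w i) ∨
   (Epar w i = w.length ∧ IsRun w (STpar w i) (Epar w i) ∧ i + Dpar w i ≤ Epar w i ∧
     STpar w i < i ∧
     IsLyndon (fpar w (STpar w i) (Epar w i)) (factor w i (Lpar w i))))

/-- The number of lost positions of `w` that are `≤ p`. -/
noncomputable def lostCount (w : List Bool) (p : ℕ) : ℕ := {q | Lost w q ∧ q ≤ p}.ncard

/-- The prefix-frequency predicate `P_d(w)`: every lost position `p` of `w`, being the
`j`-th lost position, satisfies `p - 1 ≥ j·d`. -/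
def Pd (d : ℝ) (w : List Bool) : Prop :=
  ∀ p, Lost w p → (lostCount w p : ℝ) * d ≤ (p : ℝ) - 1

/-- The number of runs of `w`. -/
noncomputable def numRuns (w : List Bool) : ℕ := {ij : ℕ × ℕ | IsRun w ij.1 ij.2}.ncard

/-- `ρ(n)`: the maximal number of runs in a binary word of length `n`. -/
noncomputable def rho (n : ℕ) : ℕ := sSup {k | ∃ w : List Bool, w.length = n ∧ numRuns w = k}

/-- The golden ratio. -/
noncomputable def goldenRatio' : ℝ := (1 + Real.sqrt 5) / 2
lemma lexlt_append_left {a b : List Bool} (c : List Bool) (h : LexLt false a b) :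
    LexLt false (c ++ a) (c ++ b) := by
  induction c with
  | nil => exact h
  | cons x xs ih => exact List.Lex.cons ih

lemma lexlt_asymm : ∀ {a b : List Bool}, LexLt false a b → LexLt false b a → False := by
  intro a b h
  induction h with
  | nil => intro h2; cases h2
  | @cons x l1 l2 h ih =>
    intro h2
    cases h2 with
    | cons h3 => exact ih h3
    | rel h3 => exact absurd h3.1 (by simp [h3.2])
  | rel h =>
    intro h2
    cases h2 with
    | cons _ => exact absurd h.1 (by simp [h.2])
    | rel h3 => exact absurd h.1 (by simp [h3.2])

lemma lyndon_prefix_lt {z : List Bool} (hz : IsLyndon false z) (q : List Bool) (hq : q ≠ [])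
    (hlt : q.length < z.length) (hpre : q <+: z) : LexLt false (q ++ z) (z ++ q) := by
  obtain ⟨s, hs⟩ := hpre
  have hsne : s ≠ [] := by
    intro h
    rw [h, List.append_nil] at hs
    rw [hs] at hlt
    omega
  have h1 := (hz.2 q s hq hsne hs.symm).2
  have h2 := lexlt_append_left q h1
  have h3 : z ++ q = q ++ (s ++ q) := by rw [← hs, List.append_assoc]
  rw [h3]
  exact h2

lemma key_lemma {z z' : List Bool} (u : List Bool) (hz : IsLyndon false z)
    (hpref : z' ++ [true] <+: z) :
    ∀ m (q : List Bool), q ≠ [] →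
      q <+: (List.replicate m z).flatten ++ z' ++ [false] ++ u →
      q ++ z = z ++ q ∨ LexLt false (q ++ z) (z ++ q) := by
  have hz'len : z'.length < z.length := by
    have := hpref.length_le
    simp at this
    omega
  have hz'pre : z' <+: z := (z'.prefix_append [true]).trans hpref
  obtain ⟨sz, hsz⟩ := hpref
  intro m
  induction m with
  | zero =>
    intro q hq hqpre
    simp only [List.replicate_zero, List.flatten_nil, List.nil_append] at hqpre
    by_cases hlen : q.length ≤ z'.length
    · have hz'p : z' <+: z' ++ [false] ++ u := by
        rw [List.append_assoc]; exact z'.prefix_append _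
      have hqz' : q <+: z' := List.prefix_of_prefix_length_le hqpre hz'p hlen
      exact Or.inr (lyndon_prefix_lt hz q hq (by omega) (hqz'.trans hz'pre))
    · push_neg at hlen
      have hqfull : z' ++ [false] <+: q :=
        List.prefix_of_prefix_length_le ((z' ++ [false]).prefix_append u) hqpre
          (by simp; omega)
      obtain ⟨t, ht⟩ := hqfull
      right
      rw [← ht, ← hsz]
      simp only [List.append_assoc]
      refine lexlt_append_left z' ?_
      exact List.Lex.rel ⟨rfl, rfl⟩
  | succ n ih =>
    intro q hq hqpre
    have hflat : ((List.replicate (n+1) z).flatten ++ z' ++ [false] ++ u)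
        = z ++ ((List.replicate n z).flatten ++ z' ++ [false] ++ u) := by
      simp [List.replicate_succ, List.append_assoc]
    rw [hflat] at hqpre
    by_cases hlen : q.length ≤ z.length
    · have hqz : q <+: z := by
        refine List.prefix_of_prefix_length_le hqpre ?_ hlen
        exact z.prefix_append _
      rcases Nat.lt_or_ge q.length z.length with h | h
      · exact Or.inr (lyndon_prefix_lt hz q hq h hqz)
      · left
        rw [hqz.eq_of_length (by omega)]
    · push_neg at hlen
      have hzq : z <+: q := by
        refine List.prefix_of_prefix_length_le ?_ hqpre (le_of_lt hlen)
        exact z.prefix_append _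
      obtain ⟨q1, hq1⟩ := hzq
      have hq1ne : q1 ≠ [] := by
        intro h
        rw [h, List.append_nil] at hq1
        rw [← hq1] at hlen
        omega
      have hq1pre : q1 <+: (List.replicate n z).flatten ++ z' ++ [false] ++ u := by
        have h2 : z ++ q1 <+: z ++ ((List.replicate n z).flatten ++ z' ++ [false] ++ u) := by
          rw [hq1]; exact hqpre
        exact (List.prefix_append_right_inj z).mp h2
      rcases ih q1 hq1ne hq1pre with h | h
      · left
        rw [← hq1, List.append_assoc, h]
      · right
        rw [← hq1]
        simp only [List.append_assoc]
        exact lexlt_append_left z h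

/-- If `z` is `≺_0`-Lyndon, `z'1` is a prefix of `z` and `k ≥ 1`, then `z`
is the longest `≺_0`-Lyndon prefix of `z^k z' 0 u`. -/
theorem longest_lyndon_prefix_broken_by_smaller (z z' u W : List Bool) (k : ℕ) (hk : 1 ≤ k)
    (hz : IsLyndon false z) (hpref : (z' ++ [true]) <+: z)
    (hW : W = (List.replicate k z).flatten ++ z' ++ [false] ++ u) :
    z <+: W ∧ ∀ p : List Bool, p <+: W → z.length < p.length → ¬ IsLyndon false p := by
  obtain ⟨k', rfl⟩ : ∃ k', k = k' + 1 := ⟨k - 1, by omega⟩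
  have hWsplit : W = z ++ ((List.replicate k' z).flatten ++ z' ++ [false] ++ u) := by
    rw [hW]
    simp [List.replicate_succ, List.append_assoc]
  have hzW : z <+: W := by
    rw [hWsplit]; exact z.prefix_append _
  refine ⟨hzW, ?_⟩
  intro p hpW hlen hL
  have hzp : z <+: p := List.prefix_of_prefix_length_le hzW hpW (le_of_lt hlen)
  obtain ⟨q, hq⟩ := hzp
  have hqne : q ≠ [] := by
    intro h
    rw [h, List.append_nil] at hq
    rw [hq] at hlen
    omega
  have hqpre : q <+: (List.replicate k' z).flatten ++ z' ++ [false] ++ u := by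
    have h2 : z ++ q <+: z ++ ((List.replicate k' z).flatten ++ z' ++ [false] ++ u) := by
      rw [hq, ← hWsplit]; exact hpW
    exact (List.prefix_append_right_inj z).mp h2
  have hkey := key_lemma u hz hpref k' q hqne hqpre
  have hcond := hL.2 z q hz.1 hqne hq.symm
  rcases hkey with h | h
  · exact hcond.1 (by rw [← hq, h])
  · exact lexlt_asymm (hq ▸ hcond.2) (hq ▸ h)
end

section
/- Let z be a ≺_0-Lyndon binary word, let z'0 be a prefix of z (z' a word followed by the letter 0), and let k ≥ 1. Then the word z^k z' 1 is a ≺_0-Lyndon word. -/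
/-- strict comparison with explicit first difference -/
def SLt (a b : List Bool) : Prop :=
  ∃ q x y, a = q ++ false :: x ∧ b = q ++ true :: y

lemma slt_append {a b : List Bool} (x y : List Bool) (h : SLt a b) :
    SLt (a ++ x) (b ++ y) := by
  obtain ⟨q, x0, y0, ha, hb⟩ := h
  exact ⟨q, x0 ++ x, y0 ++ y, by simp [ha], by simp [hb]⟩

lemma slt_ne {a b : List Bool} (h : SLt a b) : a ≠ b := by
  obtain ⟨q, x0, y0, ha, hb⟩ := h
  intro he
  rw [ha, hb] at he
  have := List.append_cancel_left he
  simp at this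

lemma slt_lex {a b : List Bool} (h : SLt a b) : LexLt false a b := by
  obtain ⟨q, x0, y0, ha, hb⟩ := h
  subst ha hb
  induction q with
  | nil => exact List.Lex.rel ⟨rfl, rfl⟩
  | cons c q ih => exact List.Lex.cons ih

lemma slt_cancel {p a b : List Bool} (h : SLt (p ++ a) (p ++ b)) : SLt a b := by
  induction p with
  | nil => simpa using h
  | cons c p ih =>
    apply ih
    obtain ⟨q, x0, y0, ha, hb⟩ := h
    cases q with
    | nil => simp at ha hb; rw [ha.1] at hb; exact absurd hb.1 (by simp)
    | cons e q =>
      simp at ha hb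
      exact ⟨q, x0, y0, ha.2, by rw [hb.2]⟩

lemma slt_asymm_aux : ∀ (q q2 x y x2 y2 : List Bool),
    q ++ false :: x = q2 ++ true :: y2 → q ++ true :: y = q2 ++ false :: x2 → False := by
  intro q
  induction q with
  | nil =>
    intro q2 x y x2 y2 h1 h2
    cases q2 with
    | nil => simp at h1
    | cons e q2 =>
      simp at h1 h2
      rw [h1.1] at h2
      simp at h2
  | cons c q ih =>
    intro q2 x y x2 y2 h1 h2
    cases q2 with
    | nil =>
      simp at h1 h2
      rw [h1.1] at h2
      simp at h2
    | cons e q2 =>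
      simp at h1 h2
      exact ih q2 x y x2 y2 h1.2 h2.2

lemma slt_asymm {a b : List Bool} (h1 : SLt a b) (h2 : SLt b a) : False := by
  obtain ⟨q, x, y, ha, hb⟩ := h1
  obtain ⟨q2, x2, y2, hb2, ha2⟩ := h2
  exact slt_asymm_aux q q2 x y x2 y2 (ha ▸ ha2) (hb ▸ hb2)

lemma lex_to_slt : ∀ a b : List Bool, a.length = b.length → LexLt false a b → SLt a b := by
  intro a
  induction a with
  | nil =>
    intro b hl h
    have : b = [] := by simpa using hl.symm
    subst this
    cases h
  | cons c a ih =>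
    intro b hl h
    cases b with
    | nil => simp at hl
    | cons d b =>
      cases h with
      | rel h => obtain ⟨h1, h2⟩ := h; simp at h2; exact ⟨[], a, b, by simp [h1], by simp [h2]⟩
      | cons h =>
        obtain ⟨q, x, y, h1, h2⟩ := ih b (by simpa using hl) h
        exact ⟨c :: q, x, y, by simp [h1], by simp [h2]⟩

lemma lyndon_slt {z a b : List Bool} (hz : IsLyndon false z) (ha : a ≠ []) (hb : b ≠ [])
    (hsplit : z = a ++ b) : SLt z (b ++ a) := by
  obtain ⟨hne, hlex⟩ := hz.2 a b ha hb hsplit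
  exact lex_to_slt _ _ (by simp [hsplit]; omega) hlex

lemma slt_or_prefix {a b c : List Bool} (h : SLt a (b ++ c)) : SLt a b ∨ b <+: a := by
  obtain ⟨q, x, y, ha, hbc⟩ := h
  rcases le_or_gt b.length q.length with hle | hlt
  · -- b is a prefix of q
    right
    have hq : b <+: q := by
      have h1 : b <+: b ++ c := List.prefix_append b c
      rw [hbc] at h1
      have h2 : b = (q ++ true :: y).take b.length := List.prefix_iff_eq_take.mp h1
      rw [List.take_append_of_le_length hle] at h2
      exact h2 ▸ List.take_prefix _ _
    calc b <+: q := hq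
      _ <+: a := ha ▸ List.prefix_append q _
  · -- q ++ [true] is a prefix of b
    left
    have h1 : q ++ [true] <+: b := by
      have h2 : q ++ [true] <+: b ++ c := by
        rw [hbc]; exact ⟨y, by simp⟩
      have h3 : q ++ [true] = (b ++ c).take (q.length + 1) := by
        have := List.prefix_iff_eq_take.mp h2
        simpa using this
      rw [List.take_append_of_le_length hlt] at h3
      exact h3 ▸ List.take_prefix _ _
    obtain ⟨y', hy'⟩ := h1
    exact ⟨q, x, y', ha, by rw [← hy']; simp⟩

lemma slt_snoc_false {a b : List Bool} (h : SLt a (b ++ [false])) : SLt a b := by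
  obtain ⟨q, x, y, ha, hb⟩ := h
  rcases le_or_gt b.length q.length with hle | hlt
  · exfalso
    have hlen : b.length + 1 = q.length + (y.length + 1) := by
      have := congrArg List.length hb; simpa using this
    have hq : q.length = b.length := by omega
    have hy' : y = [] := List.length_eq_zero_iff.mp (by omega)
    subst hy'
    have : b ++ [false] = q ++ [true] := by simpa using hb
    have := List.append_inj_right this (by omega)
    simp at this
  · have h1 : q ++ [true] <+: b := by
      have h2 : q ++ [true] <+: b ++ [false] := by
        rw [hb]; exact ⟨y, by simp⟩
      have h3 : q ++ [true] = (b ++ [false]).take (q.length + 1) := by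
        have := List.prefix_iff_eq_take.mp h2
        simpa using this
      rw [List.take_append_of_le_length hlt] at h3
      exact h3 ▸ List.take_prefix _ _
    obtain ⟨y', hy'⟩ := h1
    exact ⟨q, x, y', ha, by rw [← hy']; simp⟩

lemma slt_prefix_extract : ∀ a b x y : List Bool, a.length = b.length →
    SLt (a ++ x) (b ++ y) → SLt a b ∨ a = b := by
  intro a
  induction a with
  | nil =>
    intro b x y hl _
    right
    exact (List.length_eq_zero_iff.mp hl.symm).symm
  | cons c a ih =>
    intro b x y hl h
    cases b with
    | nil => simp at hl
    | cons d b =>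
      obtain ⟨q, x0, y0, h1, h2⟩ := h
      cases q with
      | nil =>
        simp at h1 h2
        exact Or.inl ⟨[], a, b, by simp [h1.1], by simp [h2.1]⟩
      | cons e q =>
        simp at h1 h2
        have hrec := ih b x y (by simpa using hl) ⟨q, x0, y0, h1.2, h2.2⟩
        rcases hrec with hs | he
        · obtain ⟨q0, x1, y1, ha1, hb1⟩ := hs
          exact Or.inl ⟨c :: q0, x1, y1, by simp [ha1], by simp [h1.1, ← h2.1, hb1]⟩
        · exact Or.inr (by rw [h1.1, ← h2.1, he])

lemma lyndon_suffix_slt {z s : List Bool} (hz : IsLyndon false z) (hsuf : s <:+ z)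
    (hs : s ≠ []) (hsz : s ≠ z) : SLt z s := by
  obtain ⟨u0, hu0⟩ := hsuf
  have hu0ne : u0 ≠ [] := by rintro rfl; simp at hu0; exact hsz hu0
  have h1 : SLt z (s ++ u0) := lyndon_slt hz hu0ne hs hu0.symm
  rcases slt_or_prefix h1 with h | h
  · exact h
  · exfalso
    obtain ⟨m, hm⟩ := h
    have hmne : m ≠ [] := by
      rintro rfl; simp at hm; exact hsz hm
    -- z = s ++ m and z = u0 ++ s
    have h2 : SLt m u0 := slt_cancel (a := m) (b := u0) (p := s) (by rw [hm]; exact h1)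
    have hne2 : z ≠ m ++ s := (hz.2 s m hs hmne hm.symm).1
    have h3 : SLt z (m ++ s) := lyndon_slt hz hs hmne hm.symm
    rw [← hu0] at h3
    have hlen : u0.length = m.length := by
      have := congrArg List.length hm
      rw [← hu0] at this
      simp at this
      omega
    rcases slt_prefix_extract u0 m s s hlen h3 with h4 | h4
    · exact slt_asymm h2 h4
    · rw [h4] at hu0; exact hne2 hu0.symm

lemma suffix_split {v a b : List Bool} (h : v <:+ a ++ b) :
    v <:+ b ∨ ∃ t, t <:+ a ∧ v = t ++ b := by
  obtain ⟨u, hu⟩ := h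
  rcases List.append_eq_append_iff.mp hu with ⟨w, hw1, hw2⟩ | ⟨w, hw1, hw2⟩
  · exact Or.inr ⟨w, ⟨u, hw1.symm⟩, hw2⟩
  · exact Or.inl ⟨w, hw2.symm⟩

lemma suffix_repl {z : List Bool} (hz0 : z ≠ []) : ∀ k (t : List Bool),
    t <:+ (List.replicate k z).flatten →
    t = [] ∨ ∃ s j, s <:+ z ∧ s ≠ [] ∧ j < k ∧ t = s ++ (List.replicate j z).flatten := by
  intro k
  induction k with
  | zero => intro t ht; simp at ht; exact Or.inl ht
  | succ k ih =>
    intro t ht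
    rw [List.replicate_succ, List.flatten_cons] at ht
    rcases suffix_split ht with h | ⟨s, hs, hts⟩
    · rcases ih t h with h1 | ⟨s, j, h1, h2, h3, h4⟩
      · exact Or.inl h1
      · exact Or.inr ⟨s, j, h1, h2, by omega, h4⟩
    · by_cases hse : s = []
      · subst hse
        simp at hts
        subst hts
        cases k with
        | zero => simp
        | succ k =>
          refine Or.inr ⟨z, k, List.suffix_refl z, hz0, by omega, ?_⟩
          rw [List.replicate_succ, List.flatten_cons]
      · exact Or.inr ⟨s, k, hs, hse, by omega, hts⟩

lemma flat_add (z : List Bool) (a b : ℕ) :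
    (List.replicate (a + b) z).flatten =
      (List.replicate a z).flatten ++ (List.replicate b z).flatten := by
  rw [List.replicate_add, List.flatten_append]

lemma flat_len (z : List Bool) : ∀ n, (List.replicate n z).flatten.length = n * z.length := by
  intro n
  induction n with
  | zero => simp
  | succ n ih =>
    rw [List.replicate_succ, List.flatten_cons]
    simp [ih]
    ring

lemma main_slt (z z' r : List Bool) (k : ℕ) (hk : 1 ≤ k) (hz : IsLyndon false z)
    (hzr : z = z' ++ false :: r) (v : List Bool) (hvne : v ≠ [])
    (hvlen : v.length < ((List.replicate k z).flatten ++ z' ++ [true]).length)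
    (hsuf : v <:+ (List.replicate k z).flatten ++ z' ++ [true]) :
    SLt ((List.replicate k z).flatten ++ z' ++ [true]) v := by
  have hz0 : z ≠ [] := hz.1
  obtain ⟨k', rfl⟩ : ∃ k', k = k' + 1 := ⟨k - 1, by omega⟩
  have hWsplit : (List.replicate (k' + 1) z).flatten ++ z' ++ [true] =
      z ++ ((List.replicate k' z).flatten ++ z' ++ [true]) := by
    rw [List.replicate_succ, List.flatten_cons]
    simp
  -- endgame: if z = t' ++ false :: m then we win against t' ++ [true]
  have endgame : ∀ t' m : List Bool, z = t' ++ false :: m →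
      SLt ((List.replicate (k' + 1) z).flatten ++ z' ++ [true]) (t' ++ [true]) := by
    intro t' m h
    refine ⟨t', m ++ ((List.replicate k' z).flatten ++ z' ++ [true]), [], ?_, by simp⟩
    rw [hWsplit, h]
    simp
  -- caseA: v = t' ++ [true] with t' a suffix of z'
  have caseA : ∀ t' : List Bool, t' <:+ z' →
      SLt ((List.replicate (k' + 1) z).flatten ++ z' ++ [true]) (t' ++ [true]) := by
    intro t' ht'
    obtain ⟨u', hu'⟩ := ht'
    by_cases hu'e : u' = []
    · refine endgame t' r ?_
      rw [hzr, ← hu', hu'e]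
      simp
    · have htsuf : (t' ++ [false]) ++ r <:+ z := ⟨u', by rw [hzr, ← hu']; simp⟩
      have htne : (t' ++ [false]) ++ r ≠ z := by
        intro he
        apply hu'e
        have h1 : u' ++ ((t' ++ [false]) ++ r) = z := by rw [hzr, ← hu']; simp
        rw [he] at h1
        have := congrArg List.length h1
        simp at this
        exact this
      have hslt := lyndon_suffix_slt hz htsuf (by simp) htne
      rcases slt_or_prefix hslt with h | h
      · have h2 : SLt z t' := slt_snoc_false h
        have h3 := slt_append ((List.replicate k' z).flatten ++ z' ++ [true]) [true] h2
        rw [← hWsplit] at h3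
        exact h3
      · obtain ⟨m, hm⟩ := h
        exact endgame t' m (by rw [← hm]; simp)
  -- decompose the suffix v
  rcases suffix_split (a := (List.replicate (k' + 1) z).flatten ++ z') (b := [true]) hsuf
    with h | ⟨t, ht, rfl⟩
  · -- v a nonempty suffix of [true], so v = [true]
    have hv : v = [true] := by
      rcases List.suffix_cons_iff.mp h with h1 | h1
      · exact h1
      · simp at h1; exact absurd h1 hvne
    rw [hv]
    exact caseA [] (List.nil_suffix)
  · rcases suffix_split (a := (List.replicate (k' + 1) z).flatten) (b := z') ht
    with h | ⟨t0, ht0, rfl⟩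
    · exact caseA t h
    · rcases suffix_repl hz0 (k' + 1) t0 ht0 with h1 | ⟨s, j, hsz, hsne, hjk, rfl⟩
      · rw [h1]; simpa using caseA z' (List.suffix_refl z')
      · by_cases hseq : s = z
        · -- v = z^(j+1) ++ z' ++ [true]
          subst hseq
          have hjlt : j + 1 < k' + 1 := by
            rw [List.length_append, List.length_append, List.length_append] at hvlen
            rw [flat_len] at hvlen
            simp [flat_len] at hvlen
            have hzl : 1 ≤ s.length := by
              cases s with
              | nil => exact absurd rfl hz0
              | cons a l => simp
            nlinarith
          obtain ⟨d, hd⟩ : ∃ d, k' + 1 = (j + 1) + (d + 1) := ⟨k' - j - 1, by omega⟩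
          refine ⟨(List.replicate (j + 1) s).flatten ++ z',
            r ++ ((List.replicate d s).flatten ++ z' ++ [true]), [], ?_, ?_⟩
          · rw [hd, flat_add, List.replicate_succ (n := d), List.flatten_cons]
            have e1 : s ++ ((List.replicate d s).flatten ++ (z' ++ [true])) =
                z' ++ false :: (r ++ ((List.replicate d s).flatten ++ z' ++ [true])) := by
              rw [hzr]; simp
            calc (List.replicate (j+1) s).flatten ++ (s ++ (List.replicate d s).flatten) ++ z' ++ [true]
                = (List.replicate (j+1) s).flatten ++
                    (s ++ ((List.replicate d s).flatten ++ (z' ++ [true]))) := by simp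
              _ = (List.replicate (j+1) s).flatten ++
                    (z' ++ false :: (r ++ ((List.replicate d s).flatten ++ z' ++ [true]))) := by
                  rw [e1]
              _ = _ := by simp
          · rw [List.replicate_succ, List.flatten_cons]
        · have hslt : SLt z s := lyndon_suffix_slt hz hsz hsne hseq
          have h3 := slt_append ((List.replicate k' z).flatten ++ z' ++ [true])
            ((List.replicate j z).flatten ++ z' ++ [true]) hslt
          rw [← hWsplit] at h3
          simpa using h3


/-- If `z` is `≺_0`-Lyndon, `z'0` is a prefix of `z` and `k ≥ 1`, then
`z^k z' 1` is a `≺_0`-Lyndon word. -/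
theorem lyndon_broken_by_greater (z z' : List Bool) (k : ℕ) (hk : 1 ≤ k)
    (hz : IsLyndon false z) (hpref : (z' ++ [false]) <+: z) :
    IsLyndon false ((List.replicate k z).flatten ++ z' ++ [true]) := by
  obtain ⟨r, hr⟩ := hpref
  have hzr : z = z' ++ false :: r := by rw [← hr]; simp
  constructor
  · simp
  · intro u v hu hv heq
    have hsuf : v <:+ (List.replicate k z).flatten ++ z' ++ [true] := ⟨u, heq.symm⟩
    have hvlen : v.length < ((List.replicate k z).flatten ++ z' ++ [true]).length := by
      rw [heq]
      have := List.length_pos_iff.mpr hu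
      simp
      omega
    have hmain := main_slt z z' r k hk hz hzr v hv hvlen hsuf
    have h2 := slt_append [] u hmain
    rw [List.append_nil] at h2
    exact ⟨slt_ne h2, slt_lex h2⟩
end

section
/- Let w be a binary word and let r be a run of w. Then there exists a position i with 1 < i ≤ |w| such that R_w(i) = r, i.e., every run of w lies in the range of the map R_w. -/
namespace RunAux

/-- Asymmetry of the binary lexicographic order. -/
theorem lexLt_asymm {c : Bool} : ∀ {l₁ l₂ : List Bool}, LexLt c l₁ l₂ → ¬ LexLt c l₂ l₁ := by
  intro l₁ l₂ h
  induction h with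
  | nil => intro h2; cases h2
  | @cons a l₁ l₂ _ ih =>
      intro h2
      cases h2 with
      | cons h3 => exact ih h3
      | rel h3 => simp [h3.1] at h3
  | @rel a l₁ b l₂ hab =>
      intro h2
      cases h2 with
      | cons => obtain ⟨h1, h2⟩ := hab; simp [h1] at h2
      | rel h3 => obtain ⟨h1, h2⟩ := hab; rw [h3.1] at h2; simp at h2

theorem lexLt_irrefl {c : Bool} {l : List Bool} : ¬ LexLt c l l := fun h => lexLt_asymm h h

/-- Trichotomy for equal-length binary words. -/
theorem lexLt_trichotomy {c : Bool} :
    ∀ (l₁ l₂ : List Bool), l₁.length = l₂.length →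
      l₁ = l₂ ∨ LexLt c l₁ l₂ ∨ LexLt c l₂ l₁ := by
  intro l₁
  induction l₁ with
  | nil => intro l₂ h; cases l₂ with
    | nil => exact Or.inl rfl
    | cons b m => simp at h
  | cons a m ih =>
      intro l₂ h
      cases l₂ with
      | nil => simp at h
      | cons b m' =>
          by_cases hab : a = b
          · subst hab
            rcases ih m' (by simpa using h) with h1 | h1 | h1
            · exact Or.inl (by rw [h1])
            · exact Or.inr (Or.inl (List.Lex.cons h1))
            · exact Or.inr (Or.inr (List.Lex.cons h1))
          · by_cases hac : a = c
            · exact Or.inr (Or.inl (List.Lex.rel ⟨hac, by subst hac; cases a <;> cases b <;> simp_all⟩))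
            · refine Or.inr (Or.inr (List.Lex.rel ⟨?_, ?_⟩))
              · cases a <;> cases b <;> cases c <;> simp_all
              · cases a <;> cases b <;> cases c <;> simp_all

/-- Inversion for cons-cons Lex. -/
theorem lexLt_cons_iff {c a b : Bool} {l₁ l₂ : List Bool} :
    LexLt c (a :: l₁) (b :: l₂) ↔ (a = c ∧ b = !c) ∨ (a = b ∧ LexLt c l₁ l₂) := by
  constructor
  · intro h
    cases h with
    | cons h3 => exact Or.inr ⟨rfl, h3⟩
    | rel h3 => exact Or.inl h3
  · rintro (⟨h1, h2⟩ | ⟨rfl, h2⟩)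
    · exact List.Lex.rel ⟨h1, h2⟩
    · exact List.Lex.cons h2

/-- Comparing appended words with equal-length prefixes. -/
theorem lexLt_append {c : Bool} :
    ∀ (x z y v : List Bool), x.length = z.length →
      (LexLt c (x ++ y) (z ++ v) ↔ LexLt c x z ∨ (x = z ∧ LexLt c y v)) := by
  intro x
  induction x with
  | nil =>
      intro z y v h
      cases z with
      | nil =>
          simp only [List.nil_append]
          constructor
          · intro h2; exact Or.inr ⟨by simp, h2⟩
          · rintro (h2 | ⟨-, h2⟩)
            · exact absurd h2 (by intro hh; cases hh)
            · exact h2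
      | cons b m => simp at h
  | cons a m ih =>
      intro z y v h
      cases z with
      | nil => simp at h
      | cons b m' =>
          simp only [List.cons_append, lexLt_cons_iff]
          rw [ih m' y v (by simpa using h)]
          constructor
          · rintro (h1 | ⟨rfl, h1 | ⟨rfl, h1⟩⟩)
            · exact Or.inl (Or.inl h1)
            · exact Or.inl (Or.inr ⟨rfl, h1⟩)
            · exact Or.inr ⟨rfl, h1⟩
          · rintro ((h1 | ⟨rfl, h1⟩) | ⟨heq, h1⟩)
            · exact Or.inl h1
            · exact Or.inr ⟨rfl, Or.inl h1⟩
            · rw [List.cons.injEq] at heq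
              exact Or.inr ⟨heq.1, Or.inr ⟨heq.2, h1⟩⟩

/-- Binary value of a word; lexicographically compatible. -/
def bval (c : Bool) : List Bool → ℕ
  | [] => 0
  | b :: m => (if b = c then 0 else 1) * 2 ^ m.length + bval c m

theorem bval_lt (c : Bool) : ∀ l : List Bool, bval c l < 2 ^ l.length := by
  intro l
  induction l with
  | nil => simp [bval]
  | cons b m ih =>
      simp only [bval, List.length_cons, pow_succ]
      by_cases hb : b = c <;> simp [hb] <;> omega

theorem lexLt_bval {c : Bool} :
    ∀ {l₁ l₂ : List Bool}, l₁.length = l₂.length → LexLt c l₁ l₂ → bval c l₁ < bval c l₂ := by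
  intro l₁ l₂ hlen h
  induction h with
  | nil => simp at hlen
  | @cons a l₁ l₂ _ ih =>
      have := ih (by simpa using hlen)
      simp only [bval, List.length_cons] at hlen ⊢
      have h2 : l₁.length = l₂.length := by simpa using hlen
      rw [h2]; omega
  | @rel a l₁ b l₂ hab =>
      simp only [bval]
      have h2 : l₁.length = l₂.length := by simpa using hlen
      rw [hab.1, hab.2]
      have hbc : (!c) ≠ c := by cases c <;> simp
      simp [hbc]
      calc bval c l₁ < 2 ^ l₁.length := bval_lt c l₁
        _ ≤ 2 ^ l₂.length + bval c l₂ := by rw [h2]; omega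

end RunAux
namespace RunAux

theorem isLyndon_singleton (c a : Bool) : IsLyndon c [a] := by
  refine ⟨by simp, ?_⟩
  intro u v hu hv huv
  exfalso
  rcases u with - | ⟨x, u⟩; · exact hu rfl
  rcases v with - | ⟨y, v⟩; · exact hv rfl
  have : (1:ℕ) = u.length + v.length + 2 := by
    have := congrArg List.length huv
    simpa [List.length_append] using this
  omega

theorem exists_c_split {c : Bool} : ∀ (m : List Bool), ¬ (∀ x ∈ m, x = !c) →
    ∃ t m', m = List.replicate t (!c) ++ c :: m' := by
  intro m
  induction m with
  | nil => intro h; simp at h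
  | cons a m' ih =>
      intro h
      by_cases ha : a = !c
      · subst ha
        have h' : ¬ ∀ x ∈ m', x = !c := by
          intro hh; exact h (by simpa using hh)
        obtain ⟨t, m'', hm⟩ := ih h'
        exact ⟨t+1, m'', by rw [List.replicate_succ, hm]; simp⟩
      · have ha' : a = c := by
          by_contra haa; exact ha (Bool.eq_not_iff.mpr haa)
        exact ⟨0, m', by simp [ha']⟩

/-- A Lyndon word of length ≥ 2 starts with the small letter. -/
theorem isLyndon_head {c : Bool} {l : List Bool} (h : IsLyndon c l) (h2 : 2 ≤ l.length) :
    l.head? = some c := by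
  rcases l with - | ⟨b, m⟩
  · simp at h2
  simp only [List.head?_cons, Option.some.injEq]
  by_contra hbc
  have hb : b = !c := Bool.eq_not_iff.mpr hbc
  subst hb
  by_cases hall : ∀ x ∈ m, x = !c
  · -- l is constant !c, so rotation equals itself
    have hm : m = List.replicate m.length (!c) := List.eq_replicate_length.mpr hall
    have hmne : m ≠ [] := by intro hm0; rw [hm0] at h2; simp at h2
    have := (h.2 [!c] m (by simp) hmne rfl).1
    apply this
    rw [hm]
    rw [← List.replicate_succ, ← List.replicate_succ']
  · obtain ⟨t, m'', hm⟩ := exists_c_split m hall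
    have hl : (!c) :: m = (List.replicate (t+1) (!c)) ++ (c :: m'') := by
      rw [hm, List.replicate_succ]; simp
    have hlex := (h.2 (List.replicate (t+1) (!c)) (c :: m'') (by simp) (by simp) hl).2
    rw [hl] at hlex
    rw [List.replicate_succ] at hlex
    simp only [List.cons_append] at hlex
    rcases lexLt_cons_iff.mp hlex with ⟨h1, -⟩ | ⟨h1, -⟩ <;> simp at h1

theorem not_lexLt_append_self (c : Bool) : ∀ m : List Bool, ¬ LexLt c (m ++ [c]) (c :: m) := by
  intro m
  induction m with
  | nil => simpa using (lexLt_irrefl (c := c) (l := [c]))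
  | cons a m' ih =>
      intro h
      simp only [List.cons_append] at h
      rcases lexLt_cons_iff.mp h with ⟨-, h1⟩ | ⟨rfl, h1⟩
      · simp at h1
      · exact ih h1

/-- A Lyndon word of length ≥ 2 ends with the big letter. -/
theorem isLyndon_getLast {c : Bool} {l : List Bool} (h : IsLyndon c l) (h2 : 2 ≤ l.length) :
    l.getLast? = some (!c) := by
  have hne : l ≠ [] := by intro h0; rw [h0] at h2; simp at h2
  obtain ⟨x, b, hxb⟩ : ∃ x b, l = x ++ [b] := ⟨l.dropLast, l.getLast hne, (List.dropLast_append_getLast hne).symm⟩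
  have hxne : x ≠ [] := by
    intro h0; rw [h0] at hxb; rw [hxb] at h2; simp at h2
  rw [hxb, List.getLast?_append_of_ne_nil x (by simp)]
  simp only [List.getLast?_singleton, Option.some.injEq]

  by_contra hbc
  have hb : b = c := by
    by_contra hbb; exact hbc (Bool.eq_not_iff.mpr hbb)
  subst b
  have hhead := isLyndon_head h h2
  rcases hxx : x with - | ⟨a0, x'⟩
  · exact hxne hxx
  have ha0 : a0 = c := by
    rw [hxb, hxx] at hhead; simpa using hhead
  subst a0
  have hlex := (h.2 x [c] hxne (by simp) hxb).2
  rw [hxb, hxx] at hlex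
  simp only [List.cons_append, List.singleton_append] at hlex
  rcases lexLt_cons_iff.mp hlex with ⟨-, h1⟩ | ⟨-, h1⟩
  · simp at h1
  · exact not_lexLt_append_self c x' h1

/-- Build a Lex comparison from a first difference. -/
theorem lexLt_of_get? {c : Bool} :
    ∀ (m : ℕ) (l₁ l₂ : List Bool), (∀ m' < m, l₁[m']? = l₂[m']?) →
      l₁[m]? = some c → l₂[m]? = some (!c) → LexLt c l₁ l₂ := by
  intro m
  induction m with
  | zero =>
      intro l₁ l₂ _ h1 h2
      rcases l₁ with - | ⟨a, t₁⟩; · simp at h1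
      rcases l₂ with - | ⟨b, t₂⟩; · simp at h2
      simp at h1 h2
      exact List.Lex.rel ⟨h1, h2⟩
  | succ m ih =>
      intro l₁ l₂ hpre h1 h2
      rcases l₁ with - | ⟨a, t₁⟩; · simp at h1
      rcases l₂ with - | ⟨b, t₂⟩; · simp at h2
      have hab : a = b := by
        have := hpre 0 (Nat.succ_pos m); simpa using this
      subst hab
      refine List.Lex.cons (ih t₁ t₂ ?_ (by simpa using h1) (by simpa using h2))
      intro m' hm'
      have := hpre (m' + 1) (by omega)
      simpa using this

end RunAux
namespace RunAux

theorem factor_get? (w : List Bool) (i j m : ℕ) (hi : 1 ≤ i) (hm : m < j + 1 - i) :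
    (factor w i j)[m]? = w[i - 1 + m]? := by
  unfold factor
  rw [List.getElem?_take_of_lt hm,
    List.getElem?_drop]

theorem factor_length (w : List Bool) (i j : ℕ) (hi : 1 ≤ i) (hj : j ≤ w.length) :
    (factor w i j).length = j + 1 - i := by
  unfold factor
  rw [List.length_take, List.length_drop]
  omega

theorem isPeriod_factor (w : List Bool) (i j p : ℕ) (hi : 1 ≤ i) (hj : j ≤ w.length)
    (hp : 1 ≤ p) :
    IsPeriod (factor w i j) p ↔
      ∀ a, i - 1 ≤ a → a + p + 1 ≤ j → w[a]? = w[a + p]? := by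
  constructor
  · intro h a ha hap
    have h1 := h.2 (a - (i - 1)) (by rw [factor_length w i j hi hj]; omega)
    rw [factor_get? w i j _ hi (by omega), factor_get? w i j _ hi (by omega)] at h1
    rw [show i - 1 + (a - (i-1)) = a from by omega,
      show i - 1 + (a - (i-1) + p) = a + p from by omega] at h1
    exact h1
  · intro h
    refine ⟨hp, ?_⟩
    intro k hk
    rw [factor_length w i j hi hj] at hk
    rw [factor_get? w i j k hi (by omega), factor_get? w i j (k+p) hi (by omega)]
    rw [show i - 1 + (k + p) = (i - 1 + k) + p from by omega]
    exact h (i - 1 + k) (by omega) (by omega)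

theorem per_cong (w : List Bool) (lo hi p : ℕ)
    (H : ∀ a, lo ≤ a → a + p ≤ hi → w[a]? = w[a + p]?) :
    ∀ a b, lo ≤ a → lo ≤ b → a ≤ hi → b ≤ hi → a % p = b % p →
      w[a]? = w[b]? := by
  have key : ∀ m a, lo ≤ a → a + m * p ≤ hi → w[a]? = w[a + m * p]? := by
    intro m
    induction m with
    | zero => intro a _ _; simp
    | succ m ih =>
        intro a ha hle
        rw [Nat.succ_mul] at hle ⊢
        have h1 := H a ha (by omega)
        rw [show a + (m * p + p) = (a + p) + m * p from by omega]
        rw [h1]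
        exact ih (a + p) (by omega) (by omega)
  have main : ∀ a b, a ≤ b → lo ≤ a → b ≤ hi → a % p = b % p → w[a]? = w[b]? := by
    intro a b hab ha hb hmod
    have hdvd : p ∣ (b - a) := (Nat.modEq_iff_dvd' hab).mp hmod
    obtain ⟨m, hm⟩ : ∃ m, b = a + m * p := by
      refine ⟨(b - a) / p, ?_⟩
      have := Nat.div_mul_cancel hdvd
      omega
    rw [hm]
    exact key m a ha (by omega)
  intro a b ha hb hahi hbhi hmod
  rcases le_total a b with hab | hab
  · exact main a b hab ha hbhi hmod
  · exact (main b a hab hb hahi hmod.symm).symm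

theorem get?_eq_some_getD (w : List Bool) (a : ℕ) (ha : a < w.length) :
    w[a]? = some (w.getD a false) := by
  rw [List.getD_eq_getElem?_getD, List.getElem?_eq_getElem ha]
  simp

end RunAux
namespace RunAux

theorem get?_take' (l : List Bool) (n m : ℕ) (h : m < n) : (l.take n)[m]? = l[m]? := by
  rw [List.getElem?_take_of_lt h]

theorem get?_drop' (l : List Bool) (n m : ℕ) : (l.drop n)[m]? = l[n + m]? := by
  rw [List.getElem?_drop]

end RunAux
namespace RunAux

theorem epar_eq (w : List Bool) (i j p k : ℕ)
    (hi : 1 ≤ i) (hjn : j ≤ w.length) (hp : 1 ≤ p)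
    (hper : ∀ a, i - 1 ≤ a → a + p + 1 ≤ j → w[a]? = w[a + p]?)
    (hright : j = w.length ∨ w[j]? ≠ w[j - p]?)
    (hik : i < k) (hkp : k + p ≤ j + 1)
    (hD : Dpar w k = p) :
    Epar w k = j := by
  unfold Epar
  rw [hD]
  have hk1 : 1 ≤ k := by omega
  have hmem : j ∈ {j' | j' ≤ w.length ∧ IsPeriod (factor w k j') p} := by
    refine ⟨hjn, ?_⟩
    rw [isPeriod_factor w k j p hk1 hjn hp]
    intro a ha hap
    exact hper a (by omega) (by omega)
  have hub : ∀ j' ∈ {j' | j' ≤ w.length ∧ IsPeriod (factor w k j') p}, j' ≤ j := by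
    intro j' hj'
    by_contra hgt
    push_neg at hgt
    have hjl : j < w.length := by have := hj'.1; omega
    have hr := hright.resolve_left (by omega)
    have hper' := (isPeriod_factor w k j' p hk1 hj'.1 hp).mp hj'.2
    have := hper' (j - p) (by omega) (by omega)
    rw [show j - p + p = j from by omega] at this
    exact hr this.symm
  exact le_antisymm (csSup_le ⟨j, hmem⟩ hub) (le_csSup ⟨j, hub⟩ hmem)

theorem stpar_eq (w : List Bool) (i j p k : ℕ)
    (hi : 1 ≤ i) (hjn : j ≤ w.length) (hp : 1 ≤ p)
    (hper : ∀ a, i - 1 ≤ a → a + p + 1 ≤ j → w[a]? = w[a + p]?)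
    (hleft : i = 1 ∨ w[i - 2]? ≠ w[i - 2 + p]?)
    (hik : i < k) (hkp : k + p ≤ j + 1)
    (hD : Dpar w k = p) (hL : Lpar w k = k + p - 1) :
    STpar w k = i := by
  unfold STpar
  rw [hD, hL]
  have hkpn : k + p - 1 ≤ w.length := by omega
  have hmem : i ∈ {j' | 1 ≤ j' ∧ IsPeriod (factor w j' (k + p - 1)) p} := by
    refine ⟨hi, ?_⟩
    rw [isPeriod_factor w i (k + p - 1) p hi hkpn hp]
    intro a ha hap
    exact hper a ha (by omega)
  have hlb : ∀ j' ∈ {j' | 1 ≤ j' ∧ IsPeriod (factor w j' (k + p - 1)) p}, i ≤ j' := by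
    intro j' hj'
    by_contra hlt
    push_neg at hlt
    have hi2 : 2 ≤ i := by have := hj'.1; omega
    have hl := hleft.resolve_left (by omega)
    have hper' := (isPeriod_factor w j' (k + p - 1) p hj'.1 hkpn hp).mp hj'.2
    exact hl (hper' (i - 2) (by omega) (by omega))
  exact le_antisymm (Nat.sInf_le hmem) (le_csInf ⟨i, hmem⟩ hlb)

end RunAux
/-- Every run of `w` lies in the range of the map `R_w`. -/
theorem run_in_range_of_Rmap (w : List Bool) (i j : ℕ) (h : IsRun w i j) :
    ∃ k, 1 < k ∧ k ≤ w.length ∧ Rmap w k = (i, j) := by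
  obtain ⟨hi1, hij, hjn, hple, hleft, hright⟩ := h
  set p := leastPeriod (factor w i j) with hpdef
  have hflen : (factor w i j).length = j + 1 - i := RunAux.factor_length w i j hi1 hjn
  have hne : {q | IsPeriod (factor w i j) q}.Nonempty :=
    ⟨j + 1 - i, ⟨by omega, fun k hk => absurd hk (by rw [hflen]; omega)⟩⟩
  have hpmem : IsPeriod (factor w i j) p := Nat.sInf_mem hne
  have hp1 : 1 ≤ p := hpmem.1
  have hpmin : ∀ q, IsPeriod (factor w i j) q → p ≤ q := fun q hq => Nat.sInf_le hq
  have h2p : 2 * p ≤ j - i + 1 := hple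
  have hper : ∀ a, i - 1 ≤ a → a + p + 1 ≤ j → w[a]? = w[a + p]? :=
    (RunAux.isPeriod_factor w i j p hi1 hjn hp1).mp hpmem
  have hcong := RunAux.per_cong w (i - 1) (j - 1) p (fun a ha hap => hper a ha (by omega))
  rcases eq_or_lt_of_le hp1 with hp1' | hp2
  · -- least period 1: the run is a block of equal letters
    set k := i + 1 with hkdef
    have hkn : k ≤ w.length := by omega
    set a : Bool := w.getD (i - 1) false with hadef
    have hga : w[i - 1]? = some a := RunAux.get?_eq_some_getD w (i - 1) (by omega)
    have hcpar : cpar w k = !a := by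
      unfold cpar
      rw [show k - 2 = i - 1 from by omega]
    have hconst : ∀ b, i - 1 ≤ b → b ≤ j - 1 → w[b]? = some a := by
      intro b hb1 hb2
      rw [← hga]
      exact (hcong b (i - 1) hb1 le_rfl hb2 (by omega) (by rw [← hp1', Nat.mod_one, Nat.mod_one]))
    have hLp : Lpar w k = k := by
      unfold Lpar
      have hmem : k ∈ {j' | j' ≤ w.length ∧ IsLyndon (cpar w k) (factor w k j')} := by
        refine ⟨hkn, ?_⟩
        have hfac : factor w k k = [a] := by
          apply List.ext_getElem?
          intro m
          match m with
          | 0 =>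
              rw [RunAux.factor_get? w k k 0 (by omega) (by omega)]
              simpa using hconst (k - 1 + 0) (by omega) (by omega)
          | (m+1) =>
              rw [List.getElem?_eq_none_iff.mpr, List.getElem?_eq_none_iff.mpr]
              · simp
              · rw [RunAux.factor_length w k k (by omega) hkn]; omega
        rw [hfac]
        exact RunAux.isLyndon_singleton _ a
      have hub : ∀ j' ∈ {j' | j' ≤ w.length ∧ IsLyndon (cpar w k) (factor w k j')},
          j' ≤ k := by
        intro j' hj'
        by_contra hgt
        push_neg at hgt
        have hlen : (factor w k j').length = j' + 1 - k :=
          RunAux.factor_length w k j' (by omega) hj'.1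
        have hhead : (factor w k j').head? = some a := by
          rw [List.head?_eq_getElem?, RunAux.factor_get? w k j' 0 (by omega) (by omega)]
          exact hconst (k - 1 + 0) (by omega) (by omega)
        have hh := RunAux.isLyndon_head hj'.2 (by rw [hlen]; omega)
        rw [hcpar, hhead] at hh
        simp at hh
      exact le_antisymm (csSup_le ⟨k, hmem⟩ hub) (le_csSup ⟨k, hub⟩ hmem)
    have hD : Dpar w k = p := by unfold Dpar; rw [hLp]; omega
    refine ⟨k, by omega, hkn, ?_⟩
    unfold Rmap
    rw [RunAux.stpar_eq w i j p k hi1 hjn hp1 hper hleft (by omega) (by omega) hD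
        (by rw [hLp]; omega),
      RunAux.epar_eq w i j p k hi1 hjn hp1 hper hright (by omega) (by omega) hD]
  · -- least period at least 2: use the Lyndon rotation of the root
    have hipj : i + 2 * p ≤ j + 1 := by omega
    set u0 := factor w i (i + p - 1) with hu0def
    have hu0len : u0.length = p := by
      rw [hu0def, RunAux.factor_length w i (i + p - 1) hi1 (by omega)]; omega
    set c : Bool := w.getD j false with hcdef
    obtain ⟨t0, ht0p, ht0min⟩ :
        ∃ t0 < p, ∀ t < p, RunAux.bval c (u0.rotate t0) ≤ RunAux.bval c (u0.rotate t) := by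
      obtain ⟨t0, ht0mem, hmin⟩ := Finset.exists_min_image (Finset.range p)
        (fun t => RunAux.bval c (u0.rotate t)) ⟨0, by simp; omega⟩
      exact ⟨t0, Finset.mem_range.mp ht0mem, fun t ht => hmin t (Finset.mem_range.mpr ht)⟩
    set r := u0.rotate t0 with hrdef
    have hrlen : r.length = p := by rw [hrdef, List.length_rotate, hu0len]
    have hminall : ∀ t, RunAux.bval c r ≤ RunAux.bval c (u0.rotate t) := by
      intro t
      rw [← List.rotate_mod]
      apply ht0min
      rw [hu0len]
      exact Nat.mod_lt _ (by omega)
    have hocc : ∀ t ≤ p, factor w (i + t) (i + t + p - 1) = u0.rotate t := by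
      intro t ht
      apply List.ext_getElem?
      intro m
      by_cases hm : m < p
      · have hmod : (m + t) % p < p := Nat.mod_lt _ (by omega)
        rw [RunAux.factor_get? w (i + t) (i + t + p - 1) m (by omega) (by omega),
          List.getElem?_rotate (by rw [hu0len]; exact hm), hu0len, hu0def,
          RunAux.factor_get? w i (i + p - 1) ((m + t) % p) hi1 (by omega)]
        apply hcong _ _ (by omega) (by omega) (by omega) (by omega)
        rw [Nat.add_mod_mod, show i + t - 1 + m = i - 1 + (m + t) from by omega]
      · push_neg at hm
        rw [List.getElem?_eq_none_iff.mpr, List.getElem?_eq_none_iff.mpr]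
        · rw [List.length_rotate, hu0len]; exact hm
        · rw [RunAux.factor_length w (i + t) (i + t + p - 1) (by omega) (by omega)]; omega
    set t1 := if t0 = 0 then p else t0 with ht1def
    have ht1a : 1 ≤ t1 ∧ t1 ≤ p := by rw [ht1def]; split <;> omega
    set k := i + t1 with hkdef
    have hik : i < k := by omega
    have hkp : k + p ≤ j + 1 := by omega
    have hrocc : factor w k (k + p - 1) = r := by
      have h1 := hocc t1 ht1a.2
      have h2 : u0.rotate t1 = r := by
        rw [ht1def]
        split
        · rename_i h0
          rw [hrdef, h0, List.rotate_zero, ← hu0len, List.rotate_length]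
        · rw [hrdef]
      rw [hkdef, show i + t1 + p - 1 = i + t1 + p - 1 from rfl, h1, h2]
    have hwin : ∀ m, m < p → w[k - 1 + m]? = r[m]? := by
      intro m hm
      rw [← hrocc, RunAux.factor_get? w k (k + p - 1) m (by omega) (by omega)]
    have hrne : r ≠ [] := List.ne_nil_of_length_pos (by omega)
    have hlyn : IsLyndon c r := by
      refine ⟨hrne, ?_⟩
      intro u v hu hv huv
      have hulen : u.length + v.length = p := by
        have := congrArg List.length huv
        rw [hrlen, List.length_append] at this
        omega
      have hu1 : 1 ≤ u.length := List.length_pos_iff.mpr hu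
      have hv1 : 1 ≤ v.length := List.length_pos_iff.mpr hv
      have hvu : v ++ u = r.rotate u.length := by
        rw [huv, List.rotate_eq_drop_append_take (by rw [List.length_append]; omega),
          List.drop_left, List.take_left]
      have hrvu : v ++ u = u0.rotate (t0 + u.length) := by
        rw [hvu, hrdef, List.rotate_rotate]
      have hne' : r ≠ v ++ u := by
        intro heq
        set g := u.length with hgdef
        have hgp : g < p := by omega
        have hrg : r.rotate g = r := hvu.symm.trans heq.symm
        have hrot : ∀ q, q < p → r[q]? = r[(q + g) % p]? := by
          intro q hq
          calc r[q]? = (r.rotate g)[q]? := by rw [hrg]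
            _ = r[(q + g) % r.length]? := List.getElem?_rotate (by rw [hrlen]; exact hq)
            _ = r[(q + g) % p]? := by rw [hrlen]
        have hgper : IsPeriod (factor w i j) g := by
          rw [RunAux.isPeriod_factor w i j g hi1 hjn (by omega)]
          intro a ha hag
          have hka : k - 1 ≤ a + p := by omega
          have hδp : (a + p - (k - 1)) % p < p := Nat.mod_lt _ (by omega)
          have hδ'p : (a + g + p - (k - 1)) % p < p := Nat.mod_lt _ (by omega)
          have h1 : w[a]? = w[k - 1 + (a + p - (k - 1)) % p]? := by
            apply hcong a _ (by omega) (by omega) (by omega) (by omega)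
            rw [Nat.add_mod_mod, show k - 1 + (a + p - (k - 1)) = a + p from by omega,
              Nat.add_mod_right]
          have h2 : w[a + g]? = w[k - 1 + (a + g + p - (k - 1)) % p]? := by
            apply hcong _ _ (by omega) (by omega) (by omega) (by omega)
            rw [Nat.add_mod_mod, show k - 1 + (a + g + p - (k - 1)) = a + g + p from by omega,
              Nat.add_mod_right]
          have h3 := hwin _ hδp
          have h4 := hwin _ hδ'p
          have h5 : r[(a + p - (k - 1)) % p]? = r[(a + g + p - (k - 1)) % p]? := by
            rw [hrot _ hδp]
            congr 1
            rw [Nat.mod_add_mod, show a + p - (k - 1) + g = a + g + p - (k - 1) from by omega]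
          rw [h1, h3, h5, ← h4, ← h2]
        have := hpmin g hgper
        omega
      refine ⟨hne', ?_⟩
      have hlen2 : r.length = (v ++ u).length := by rw [List.length_append, hrlen]; omega
      rcases RunAux.lexLt_trichotomy r (v ++ u) hlen2 with he | hl | hl
      · exact absurd he hne'
      · exact hl
      · exfalso
        have hb := RunAux.lexLt_bval hlen2.symm hl
        have hge := hminall (t0 + u.length)
        rw [← hrvu] at hge
        omega
    have hrhead : r[0]? = some c := by
      rw [← List.head?_eq_getElem?]
      exact RunAux.isLyndon_head hlyn (by omega)
    have hrlast : r[p - 1]? = some (!c) := by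
      have hgl := RunAux.isLyndon_getLast hlyn (by omega)
      rw [List.getLast?_eq_getElem?, hrlen] at hgl
      exact hgl
    have hwk1 : w[k - 1]? = some c := by
      have := hwin 0 (by omega)
      rw [Nat.add_zero] at this
      rw [this]
      exact hrhead
    have hwklast : w[k + p - 2]? = some (!c) := by
      have := hwin (p - 1) (by omega)
      rw [show k - 1 + (p - 1) = k + p - 2 from by omega] at this
      rw [this]
      exact hrlast
    have hcparc : cpar w k = c := by
      unfold cpar
      have h1 : w[k - 2]? = some (!c) := by
        have h2 := hper (k - 2) (by omega) (by omega)
        rw [show k - 2 + p = k + p - 2 from by omega] at h2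
        rw [h2]
        exact hwklast
      rw [RunAux.get?_eq_some_getD w (k - 2) (by omega)] at h1
      simp only [Option.some.injEq] at h1
      rw [h1, Bool.not_not]
    have hLp : Lpar w k = k + p - 1 := by
      unfold Lpar
      rw [hcparc]
      have hmem : k + p - 1 ∈ {j' | j' ≤ w.length ∧ IsLyndon c (factor w k j')} :=
        ⟨by omega, by rw [hrocc]; exact hlyn⟩
      have hub : ∀ j' ∈ {j' | j' ≤ w.length ∧ IsLyndon c (factor w k j')},
          j' ≤ k + p - 1 := by
        intro j' hj'
        by_contra hgt
        push_neg at hgt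
        obtain ⟨hj'n, hj'lyn⟩ := hj'
        have hkpj' : k + p ≤ j' := by omega
        set L := j' + 1 - k with hLdef
        have hLp2 : p + 1 ≤ L := by omega
        set t := factor w k j' with htdef
        have htlen : t.length = L := by
          rw [htdef, RunAux.factor_length w k j' (by omega) hj'n]
        have htget : ∀ m, m < L → t[m]? = w[k - 1 + m]? := fun m hm =>
          RunAux.factor_get? w k j' m (by omega) (by omega)
        have htakep : (t.take p).length = p := by rw [List.length_take]; omega
        have hdropp : (t.drop p).length = L - p := by rw [List.length_drop]; omega
        have hdropLp : (t.drop (L - p)).length = p := by rw [List.length_drop]; omega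
        have htakene : t.take p ≠ [] := List.ne_nil_of_length_pos (by omega)
        have hdropne : t.drop p ≠ [] := List.ne_nil_of_length_pos (by omega)
        by_cases hj'j : j' ≤ j
        · -- still inside the run: t has period p and length > p, so not Lyndon
          have hshift : t.take (L - p) = t.drop p := by
            apply List.ext_getElem?
            intro m
            by_cases hm : m < L - p
            · rw [RunAux.get?_take' t (L - p) m hm, RunAux.get?_drop' t p m,
                htget m (by omega), htget (p + m) (by omega)]
              have hx := hper (k - 1 + m) (by omega) (by omega)
              rw [show k - 1 + m + p = k - 1 + (p + m) from by omega] at hx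
              exact hx
            · rw [List.getElem?_eq_none_iff.mpr, List.getElem?_eq_none_iff.mpr]
              · rw [hdropp]; omega
              · rw [List.length_take]; omega
          have hxy : t = t.take p ++ t.drop p := (List.take_append_drop p t).symm
          have hxy2 : t = t.drop p ++ t.drop (L - p) := by
            conv_lhs => rw [← List.take_append_drop (L - p) t]
            rw [hshift]
          have hf1 := hj'lyn.2 (t.take p) (t.drop p) htakene hdropne hxy
          have hf2 := hj'lyn.2 (t.take (L - p)) (t.drop (L - p))
            (List.ne_nil_of_length_pos (by rw [List.length_take]; omega))
            (List.ne_nil_of_length_pos (by omega))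
            (List.take_append_drop (L - p) t).symm
          -- from hf1: Lex (drop (L-p)) (take p), and they differ
          have hBC : t.drop (L - p) ≠ t.take p := by
            intro heq
            exact hf1.1 (hxy2.trans (by rw [heq]))
          have h1' : LexLt c (t.drop p ++ t.drop (L - p)) (t.drop p ++ t.take p) := by
            rw [← hxy2]
            exact hf1.2
          have hlexBC : LexLt c (t.drop (L - p)) (t.take p) := by
            rcases (RunAux.lexLt_append (t.drop p) (t.drop p) _ _ rfl).mp h1' with hxx | ⟨-, hxx⟩
            · exact absurd hxx RunAux.lexLt_irrefl
            · exact hxx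
          -- from hf2: Lex (take p) (drop (L-p))
          have h2' : LexLt c (t.take p ++ t.drop p) (t.drop (L - p) ++ t.take (L - p)) := by
            rw [← hxy]
            exact hf2.2
          rw [hshift] at h2'
          have hlexCB : LexLt c (t.take p) (t.drop (L - p)) := by
            rcases (RunAux.lexLt_append (t.take p) (t.drop (L - p)) _ _
                (by rw [htakep, hdropLp])).mp h2' with hxx | ⟨heq, -⟩
            · exact hxx
            · exact absurd heq.symm hBC
          exact RunAux.lexLt_asymm hlexCB hlexBC
        · -- t sticks out of the run on the right
          push_neg at hj'j
          have hjn2 : j < w.length := by omega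
          have hc : w[j]? = some c := by
            rw [hcdef]
            exact RunAux.get?_eq_some_getD w j hjn2
          have hrt := hright.resolve_left (by omega)
          have hkpj : k + p ≤ j := by
            rcases Nat.lt_or_ge (k + p) (j + 1) with hh | hh
            · omega
            · exfalso
              have hkj : k - 1 = j - p := by omega
              rw [hkj] at hwk1
              exact hrt (by rw [hc, hwk1])
          set d := j + 1 - k with hddef
          have hdp : p + 1 ≤ d := by omega
          have hdL : d < L := by omega
          have hf := hj'lyn.2 (t.take p) (t.drop p) htakene hdropne
            (List.take_append_drop p t).symm
          apply RunAux.lexLt_asymm hf.2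
          apply RunAux.lexLt_of_get? (d - p)
          · intro m' hm'
            rw [List.getElem?_append_left (by rw [hdropp]; omega), RunAux.get?_drop' t p m',
              htget (p + m') (by omega), htget m' (by omega)]
            have hx := hper (k - 1 + m') (by omega) (by omega)
            rw [show k - 1 + m' + p = k - 1 + (p + m') from by omega] at hx
            exact hx.symm
          · rw [List.getElem?_append_left (by rw [hdropp]; omega), RunAux.get?_drop' t p (d - p),
              htget (p + (d - p)) (by omega), show k - 1 + (p + (d - p)) = j from by omega]
            exact hc
          · rw [htget (d - p) (by omega), show k - 1 + (d - p) = j - p from by omega]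
            have hlt : j - p < w.length := by omega
            rw [RunAux.get?_eq_some_getD w (j - p) hlt]
            have hne2 : w.getD (j - p) false ≠ c := by
              intro heq
              apply hrt
              rw [hc, RunAux.get?_eq_some_getD w (j - p) hlt, heq]
            rw [Bool.eq_not_iff.mpr hne2]
      exact le_antisymm (csSup_le ⟨_, hmem⟩ hub) (le_csSup ⟨k + p - 1, hub⟩ hmem)
    have hD : Dpar w k = p := by unfold Dpar; rw [hLp]; omega
    refine ⟨k, by omega, by omega, ?_⟩
    unfold Rmap
    rw [RunAux.stpar_eq w i j p k hi1 hjn hp1 hper hleft hik hkp hD hLp,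
      RunAux.epar_eq w i j p k hi1 hjn hp1 hper hright hik hkp hD]
end

section
/- Every binary word of length n ≥ 1 has strictly fewer than n runs; consequently ρ(n) < n for all n ≥ 1. -/
namespace RunsAux

/-! ### factor and period basics -/

lemma factor_length {w : List Bool} {i j : ℕ} (h1 : 1 ≤ i) (hij : i ≤ j) (hj : j ≤ w.length) :
    (factor w i j).length = j + 1 - i := by
  simp only [factor, List.length_take, List.length_drop]
  omega

lemma factor_get? {w : List Bool} {i j k : ℕ} (h1 : 1 ≤ i) (hj : j ≤ w.length)
    (hk : k < j + 1 - i) : (factor w i j)[k]? = w[i - 1 + k]? := by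
  unfold factor
  rw [List.getElem?_take_of_lt hk, List.getElem?_drop]

lemma get?_exists {w : List Bool} {k : ℕ} (h : k < w.length) : ∃ b, w[k]? = some b :=
  ⟨w[k], List.getElem?_eq_getElem h⟩

lemma isPeriod_trivial (v : List Bool) : IsPeriod v (v.length + 1) :=
  ⟨by omega, fun k hk => absurd hk (by omega)⟩

lemma leastPeriod_isPeriod (v : List Bool) : IsPeriod v (leastPeriod v) := by
  have h : {p | IsPeriod v p}.Nonempty := ⟨v.length + 1, isPeriod_trivial v⟩
  exact Nat.sInf_mem h

lemma leastPeriod_le {v : List Bool} {q : ℕ} (h : IsPeriod v q) : leastPeriod v ≤ q :=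
  Nat.sInf_le (by exact h)

lemma leastPeriod_pos (v : List Bool) : 1 ≤ leastPeriod v := (leastPeriod_isPeriod v).1

/-! ### run basics -/

lemma run_per {w : List Bool} {i j : ℕ} (hr : IsRun w i j) :
    ∀ x, i - 1 ≤ x → x + leastPeriod (factor w i j) < j →
      w[x]? = w[x + leastPeriod (factor w i j)]? := by
  have h1 : 1 ≤ i := hr.1
  have hij : i < j := hr.2.1
  have hj : j ≤ w.length := hr.2.2.1
  set p := leastPeriod (factor w i j) with hp
  have hper := (leastPeriod_isPeriod (factor w i j)).2
  intro x hx hxp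
  have hk : (x - (i - 1)) + leastPeriod (factor w i j) < (factor w i j).length := by
    rw [factor_length h1 hij.le hj]; omega
  have h := hper (x - (i - 1)) hk
  rw [factor_get? h1 hj (by omega), factor_get? h1 hj (by omega)] at h
  have e1 : i - 1 + (x - (i - 1)) = x := by omega
  have e2 : i - 1 + (x - (i - 1) + leastPeriod (factor w i j)) = x + p := by omega
  rw [e1, e2] at h
  exact h

lemma run_min {w : List Bool} {i j : ℕ} (hr : IsRun w i j) {q : ℕ} (hq : 1 ≤ q)
    (hper : ∀ x, i - 1 ≤ x → x + q < j → w[x]? = w[x + q]?) :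
    leastPeriod (factor w i j) ≤ q := by
  have h1 : 1 ≤ i := hr.1
  have hij : i < j := hr.2.1
  have hj : j ≤ w.length := hr.2.2.1
  refine leastPeriod_le ⟨hq, fun k hk => ?_⟩
  rw [factor_length h1 hij.le hj] at hk
  rw [factor_get? h1 hj (by omega), factor_get? h1 hj (by omega)]
  have h := hper (i - 1 + k) (by omega) (by omega)
  rw [h]
  congr 1
  omega

lemma run_mod {w : List Bool} {i j : ℕ} (hr : IsRun w i j) :
    ∀ x, x < j + 1 - i →
      w[i - 1 + x]? = w[i - 1 + x % leastPeriod (factor w i j)]? := by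
  have h1 : 1 ≤ i := hr.1
  have hij : i < j := hr.2.1
  set p := leastPeriod (factor w i j) with hp
  have hp1 : 1 ≤ p := leastPeriod_pos _
  intro x
  induction x using Nat.strong_induction_on with
  | _ x ih =>
    intro hx
    by_cases hxp : x < p
    · rw [Nat.mod_eq_of_lt hxp]
    · push_neg at hxp
      have hstep := run_per hr (i - 1 + (x - p)) (by omega) (by omega)
      have e : i - 1 + (x - p) + leastPeriod (factor w i j) = i - 1 + x := by omega
      rw [e] at hstep
      rw [← hstep, ih (x - p) (by omega) (by omega), Nat.mod_eq_sub_mod hxp]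


/-! ### Pointwise lexicographic comparison -/

def Before (c : Bool) (A B : List Bool) : Prop :=
  ∃ s : ℕ, (∀ l, l < s → A[l]? = B[l]?) ∧ A[s]? = some c ∧ B[s]? = some (!c)

lemma bool_resolve {c x y : Bool} (h : x ≠ y) : (x = c ∧ y = !c) ∨ (x = !c ∧ y = c) := by
  cases c <;> cases x <;> cases y <;> simp_all

lemma before_asymm {c : Bool} {A B : List Bool} (h1 : Before c A B) (h2 : Before c B A) :
    False := by
  obtain ⟨s1, e1, a1, b1⟩ := h1
  obtain ⟨s2, e2, a2, b2⟩ := h2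
  rcases lt_trichotomy s1 s2 with h | h | h
  · have h3 := e2 s1 h; rw [a1, b1] at h3; simp at h3
  · subst h; rw [a1] at b2; simp at b2
  · have h3 := e1 s2 h; rw [a2, b2] at h3; simp at h3

lemma before_trans {c : Bool} {A B C : List Bool} (h1 : Before c A B) (h2 : Before c B C) :
    Before c A C := by
  obtain ⟨s1, e1, a1, b1⟩ := h1
  obtain ⟨s2, e2, a2, b2⟩ := h2
  rcases lt_trichotomy s1 s2 with h | h | h
  · exact ⟨s1, fun l hl => (e1 l hl).trans (e2 l (by omega)), a1, by rw [← e2 s1 h]; exact b1⟩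
  · subst h
    exact ⟨s1, fun l hl => (e1 l hl).trans (e2 l hl), a1, b2⟩
  · exact ⟨s2, fun l hl => (e1 l (by omega)).trans (e2 l hl), by rw [e1 s2 h]; exact a2, b2⟩

lemma before_total {c : Bool} {A B : List Bool} (hlen : A.length = B.length) (hne : A ≠ B) :
    Before c A B ∨ Before c B A := by
  have hS : {l : ℕ | A[l]? ≠ B[l]?}.Nonempty := by
    by_contra h
    exact hne (List.ext_getElem? fun n => by
      by_contra hn
      exact h ⟨n, hn⟩)
  set s := sInf {l : ℕ | A[l]? ≠ B[l]?} with hs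
  have hmem : A[s]? ≠ B[s]? := Nat.sInf_mem hS
  have hlt : ∀ l, l < s → A[l]? = B[l]? := by
    intro l hl
    by_contra hc
    exact absurd (Nat.sInf_le (show l ∈ {l : ℕ | A[l]? ≠ B[l]?} from hc)) (by omega)
  have hsl : s < A.length := by
    by_contra hc
    push_neg at hc
    rw [List.getElem?_eq_none_iff.2 hc, List.getElem?_eq_none_iff.2 (by omega)] at hmem
    exact hmem rfl
  obtain ⟨x, hx⟩ := get?_exists hsl
  obtain ⟨y, hy⟩ := get?_exists (show s < B.length by omega)
  have hxy : x ≠ y := fun h => hmem (by rw [hx, hy, h])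
  rcases bool_resolve (c := c) hxy with ⟨h1, h2⟩ | ⟨h1, h2⟩
  · exact Or.inl ⟨s, hlt, by rw [hx, h1], by rw [hy, h2]⟩
  · exact Or.inr ⟨s, fun l hl => (hlt l hl).symm, by rw [hy, h2], by rw [hx, h1]⟩

/-! ### rotations -/

def rot (d : ℕ) (l : List Bool) : List Bool := l.drop d ++ l.take d

lemma rot_length (d : ℕ) (l : List Bool) : (rot d l).length = l.length := by
  simp only [rot, List.length_append, List.length_drop, List.length_take]
  omega

lemma rot_get? {d k : ℕ} {l : List Bool} (hd : d ≤ l.length) (hk : k < l.length) :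
    (rot d l)[k]? = l[(d + k) % l.length]? := by
  unfold rot
  by_cases h : k < l.length - d
  · rw [List.getElem?_append_left (by rw [List.length_drop]; omega), List.getElem?_drop,
      Nat.mod_eq_of_lt (by omega)]
  · push_neg at h
    rw [List.getElem?_append_right (by rw [List.length_drop]; omega), List.length_drop,
      List.getElem?_take_of_lt (by omega : k - (l.length - d) < d)]
    congr 1
    have h2 : d + k = l.length + (k - (l.length - d)) := by omega
    rw [h2, Nat.add_mod_left, Nat.mod_eq_of_lt (by omega)]

def LynB (c : Bool) (v : List Bool) : Prop :=
  ∀ d, 0 < d → d < v.length → Before c v (rot d v)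

lemma lyn_not_const {c b : Bool} {v : List Bool} (h : LynB c v) (h2 : 2 ≤ v.length)
    (hb : ∀ k, k < v.length → v[k]? = some b) : False := by
  have hrot : rot 1 v = v := List.ext_getElem? fun k => by
    by_cases hk : k < v.length
    · rw [rot_get? (by omega) hk, hb k hk, hb _ (Nat.mod_lt _ (by omega))]
    · rw [List.getElem?_eq_none_iff.2 (by rw [rot_length]; omega), List.getElem?_eq_none_iff.2 (by omega)]
  have hB := h 1 one_pos (by omega)
  rw [hrot] at hB
  exact before_asymm hB hB

lemma lyn_head {c : Bool} {v : List Bool} (h : LynB c v) (h2 : 2 ≤ v.length) :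
    v[0]? = some c := by
  obtain ⟨b, hb⟩ := get?_exists (show 0 < v.length by omega)
  by_cases hbc : b = c
  · rw [hb, hbc]
  · exfalso
    have hbc' : b = !c := by cases b <;> cases c <;> simp_all
    by_cases hex : ∃ dd, dd < v.length ∧ v[dd]? = some c
    · have hne : {dd | dd < v.length ∧ v[dd]? = some c}.Nonempty := hex
      set d0 := sInf {dd | dd < v.length ∧ v[dd]? = some c} with hd0
      have hd0m : d0 < v.length ∧ v[d0]? = some c := Nat.sInf_mem hne
      have hd0pos : 0 < d0 := by
        rcases Nat.eq_zero_or_pos d0 with h0 | h0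
        · exfalso
          have hh := hd0m.2
          rw [h0, hb, hbc'] at hh
          simp at hh
        · exact h0
      obtain ⟨s, hag, hvs, hrs⟩ := h d0 hd0pos hd0m.1
      have hrot0 : (rot d0 v)[0]? = some c := by
        rw [rot_get? (by omega) (by omega), Nat.add_zero, Nat.mod_eq_of_lt hd0m.1]
        exact hd0m.2
      rcases Nat.eq_zero_or_pos s with hs0 | hs0
      · rw [hs0, hb] at hvs
        exact hbc (by simpa using hvs)
      · have hh := hag 0 hs0
        rw [hb, hrot0] at hh
        exact hbc (by simpa using hh)
    · push_neg at hex
      refine lyn_not_const (b := !c) h h2 (fun k hk => ?_)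
      obtain ⟨x, hx⟩ := get?_exists hk
      have hxk := hex k hk
      rw [hx] at hxk
      have hxc : x = !c := by cases x <;> cases c <;> simp_all
      rw [hx, hxc]

lemma lyn_last {c : Bool} {v : List Bool} (h : LynB c v) (h2 : 2 ≤ v.length) :
    v[v.length - 1]? = some (!c) := by
  set p := v.length with hp
  obtain ⟨b, hb⟩ := get?_exists (show p - 1 < v.length by omega)
  by_cases hbc : b = !c
  · rw [hb, hbc]
  · exfalso
    have hbc' : b = c := by cases b <;> cases c <;> simp_all
    have hex : ∃ y, y < p ∧ v[y]? = some (!c) := by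
      by_contra hexn
      push_neg at hexn
      refine lyn_not_const (b := c) h h2 (fun k hk => ?_)
      obtain ⟨x, hx⟩ := get?_exists hk
      have hxk := hexn k (by omega)
      rw [hx] at hxk
      have hxc : x = c := by cases x <;> cases c <;> simp_all
      rw [hx, hxc]
    obtain ⟨y, hy, hyv⟩ := hex
    have hene : {d | d < p ∧ v[p - 1 - d]? = some (!c)}.Nonempty :=
      ⟨p - 1 - y, by omega, by rw [show p - 1 - (p - 1 - y) = y by omega]; exact hyv⟩
    set e := sInf {d | d < p ∧ v[p - 1 - d]? = some (!c)} with he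
    have hemem : e < p ∧ v[p - 1 - e]? = some (!c) := Nat.sInf_mem hene
    have hTR : ∀ dd, dd < e → v[p - 1 - dd]? = some c := by
      intro dd hdd
      obtain ⟨x, hx⟩ := get?_exists (show p - 1 - dd < v.length by omega)
      have hxc : x = c := by
        by_contra hxc
        have hx' : x = !c := by cases x <;> cases c <;> simp_all
        have hmem : dd ∈ {d | d < p ∧ v[p - 1 - d]? = some (!c)} :=
          ⟨by omega, by rw [hx, hx']⟩
        exact absurd (Nat.sInf_le hmem) (by omega)
      rw [hx, hxc]
    have he1 : 1 ≤ e := by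
      rcases Nat.eq_zero_or_pos e with h0 | h0
      · exfalso
        have hh := hemem.2
        rw [h0, Nat.sub_zero, hb, hbc'] at hh
        simp at hh
      · exact h0
    have hsne : {d | d < p ∧ v[d]? = some (!c)}.Nonempty := ⟨y, hy, hyv⟩
    set s := sInf {d | d < p ∧ v[d]? = some (!c)} with hs
    have hsmem : s < p ∧ v[s]? = some (!c) := Nat.sInf_mem hsne
    have hLE : ∀ l, l < s → v[l]? = some c := by
      intro l hl
      obtain ⟨x, hx⟩ := get?_exists (show l < v.length by omega)
      have hxc : x = c := by
        by_contra hxc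
        have hx' : x = !c := by cases x <;> cases c <;> simp_all
        exact absurd (Nat.sInf_le (show l ∈ {d | d < p ∧ v[d]? = some (!c)} from
          ⟨by omega, by rw [hx, hx']⟩)) (by omega)
      rw [hx, hxc]
    have hs1 : 1 ≤ s := by
      rcases Nat.eq_zero_or_pos s with h0 | h0
      · exfalso
        have hh := hsmem.2
        rw [h0, lyn_head h h2] at hh
        simp at hh
      · exact h0
    have hsle : s ≤ p - 1 - e := Nat.sInf_le ⟨by omega, hemem.2⟩
    obtain ⟨sw, hagw, hvw, hrw⟩ := h (p - e) (by omega) (by omega)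
    have hRG : ∀ k, k < p → (rot (p - e) v)[k]? = v[(p - e + k) % p]? := by
      intro k hk
      rw [rot_get? (by omega) (by omega), ← hp]
    have hG1 : ∀ l, l < s → v[l]? = (rot (p - e) v)[l]? := by
      intro l hl
      rw [hRG l (by omega)]
      by_cases hle : l < e
      · rw [Nat.mod_eq_of_lt (by omega), show p - e + l = p - 1 - (e - 1 - l) by omega,
          hTR _ (by omega), hLE l hl]
      · rw [show p - e + l = p + (l - e) by omega, Nat.add_mod_left,
          Nat.mod_eq_of_lt (by omega), hLE (l - e) (by omega), hLE l hl]
    have hG2 : (rot (p - e) v)[s]? = some c := by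
      rw [hRG s (by omega)]
      by_cases hle : s < e
      · rw [Nat.mod_eq_of_lt (by omega), show p - e + s = p - 1 - (e - 1 - s) by omega]
        exact hTR _ (by omega)
      · rw [show p - e + s = p + (s - e) by omega, Nat.add_mod_left,
          Nat.mod_eq_of_lt (by omega)]
        exact hLE (s - e) (by omega)
    rcases lt_trichotomy sw s with hss | hss | hss
    · have hh := hG1 sw hss
      rw [hvw, hrw] at hh
      simp at hh
    · rw [hss, hsmem.2] at hvw
      simp at hvw
    · have hh := hagw s hss
      rw [hsmem.2, hG2] at hh
      simp at hh

lemma exists_min (c : Bool) (g : ℕ → List Bool) (p : ℕ) (hp : 1 ≤ p) :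
    ∃ d, d < p ∧ ∀ e, e < p → ¬ Before c (g e) (g d) := by
  induction p with
  | zero => omega
  | succ p ih =>
    rcases Nat.eq_zero_or_pos p with h0 | h0
    · subst h0
      refine ⟨0, by omega, fun e he hB => ?_⟩
      have he0 : e = 0 := by omega
      subst he0
      exact before_asymm hB hB
    · obtain ⟨d, hd, hmin⟩ := ih h0
      by_cases hB : Before c (g p) (g d)
      · refine ⟨p, by omega, fun e he hBe => ?_⟩
        rcases Nat.lt_or_ge e p with h | h
        · exact hmin e h (before_trans hBe hB)
        · have hep : e = p := by omega
          subst hep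
          exact before_asymm hBe hBe
      · refine ⟨d, by omega, fun e he hBe => ?_⟩
        rcases Nat.lt_or_ge e p with h | h
        · exact hmin e h hBe
        · have hep : e = p := by omega
          subst hep
          exact hB hBe

/-! ### the crux lemma: no long Lyndon factor starts inside a run -/

lemma run_longest {w : List Bool} {i j t m : ℕ} {c : Bool} (hr : IsRun w i j)
    (hc : j < w.length → w[j]? = some c)
    (hit : i < t) (htj : t + leastPeriod (factor w i j) - 1 ≤ j)
    (hm : leastPeriod (factor w i j) < m) (hmn : t + m - 1 ≤ w.length) :
    ¬ LynB c (factor w t (t + m - 1)) := by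
  intro hLyn
  set p := leastPeriod (factor w i j) with hpdef
  have h1 : 1 ≤ i := hr.1
  have hij : i < j := hr.2.1
  have hjn : j ≤ w.length := hr.2.2.1
  have hp1 : 1 ≤ p := leastPeriod_pos _
  have ht1 : 1 ≤ t := by omega
  set μ := factor w t (t + m - 1) with hmu
  have hμlen : μ.length = m := by
    rw [hmu, factor_length ht1 (by omega) hmn]; omega
  have hμg : ∀ k, k < m → μ[k]? = w[t - 1 + k]? := by
    intro k hk
    rw [hmu, factor_get? ht1 hmn (by omega)]
  obtain ⟨s, hag, hμs, hρs⟩ := hLyn p hp1 (by omega)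
  have hs_lt : s < m := by
    by_contra hcon
    rw [List.getElem?_eq_none_iff.2 (by omega)] at hμs
    simp at hμs
  have hρg : ∀ k, k < m → (rot p μ)[k]? = μ[(p + k) % m]? := by
    intro k hk
    rw [rot_get? (by omega) (by omega), hμlen]
  by_cases hcase : t + m - 1 ≤ j
  · -- entirely inside the run
    have hperμ : ∀ k, k + p < m → μ[k]? = μ[k + p]? := by
      intro k hk
      rw [hμg k (by omega), hμg (k + p) (by omega)]
      have hh := run_per hr (t - 1 + k) (by omega) (by omega)
      rw [hh]
      congr 1
      omega
    have hs_ge : m - p ≤ s := by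
      by_contra hcon
      push_neg at hcon
      have hh : (rot p μ)[s]? = μ[s]? := by
        rw [hρg s hs_lt, Nat.mod_eq_of_lt (by omega), Nat.add_comm p s,
          ← hperμ s (by omega)]
      rw [hh, hμs] at hρs
      simp at hρs
    set s2 := s - (m - p) with hs2def
    have hs2p : s2 < p := by omega
    have hA1 : μ[s2]? = some (!c) := by
      rw [← hρs, hρg s hs_lt]
      congr 1
      rw [show p + s = m + s2 by omega, Nat.add_mod_left, Nat.mod_eq_of_lt (by omega)]
    obtain ⟨s', hag', hμs', hρs'⟩ := hLyn (m - p) (by omega) (by omega)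
    have hs'_lt : s' < m := by
      by_contra hcon
      rw [List.getElem?_eq_none_iff.2 (by omega)] at hμs'
      simp at hμs'
    have hρ'g : ∀ k, k < m → (rot (m - p) μ)[k]? = μ[(m - p + k) % m]? := by
      intro k hk
      rw [rot_get? (by omega) (by omega), hμlen]
    have hs'_lt_p : s' < p := by
      by_contra hcon
      push_neg at hcon
      have hh : (rot (m - p) μ)[s']? = μ[s']? := by
        rw [hρ'g s' hs'_lt, show (m - p + s') % m = s' - p by
            rw [show m - p + s' = m + (s' - p) by omega, Nat.add_mod_left,
              Nat.mod_eq_of_lt (by omega)],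
          hperμ (s' - p) (by omega)]
        congr 1
        omega
      rw [hh, hμs'] at hρs'
      simp at hρs'
    have hB1 : μ[m - p + s']? = some (!c) := by
      rw [← hρs', hρ'g s' hs'_lt, Nat.mod_eq_of_lt (by omega)]
    have hAG1 : ∀ l2, l2 < s2 → μ[m - p + l2]? = μ[l2]? := by
      intro l2 hl2
      have hh := hag (m - p + l2) (by omega)
      rw [hρg (m - p + l2) (by omega),
        show (p + (m - p + l2)) % m = l2 by
          rw [show p + (m - p + l2) = m + l2 by omega, Nat.add_mod_left,
            Nat.mod_eq_of_lt (by omega)]] at hh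
      exact hh
    have hAG2 : ∀ l, l < s' → μ[l]? = μ[m - p + l]? := by
      intro l hl
      have hh := hag' l (by omega)
      rw [hρ'g l (by omega), Nat.mod_eq_of_lt (by omega)] at hh
      exact hh
    rcases lt_trichotomy s2 s' with hss | hss | hss
    · have hh := hAG2 s2 hss
      rw [hA1, show m - p + s2 = s by omega, hμs] at hh
      simp at hh
    · rw [← hss, hA1] at hμs'
      simp at hμs'
    · have hh := hAG1 s' hss
      rw [hB1, hμs'] at hh
      simp at hh
  · -- sticks out of the run on the right
    push_neg at hcase
    have hjn' : j < w.length := by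
      rcases Nat.lt_or_ge j w.length with h | h
      · exact h
      · omega
    have wj : w[j]? = some c := hc hjn'
    have hmis : w[j]? ≠ w[j - p]? := by
      rcases hr.2.2.2.2.2 with h | h
      · omega
      · exact h
    set s0 := j + 1 - t - p with hs0def
    have hs0m : s0 < m - p := by omega
    have hE1 : ∀ l, l < s0 → μ[l]? = (rot p μ)[l]? := by
      intro l hl
      rw [hρg l (by omega), Nat.mod_eq_of_lt (by omega), hμg l (by omega),
        hμg (p + l) (by omega)]
      have hh := run_per hr (t - 1 + l) (by omega) (by omega)
      rw [hh]
      congr 1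
      omega
    have hE2 : (rot p μ)[s0]? = some c := by
      rw [hρg s0 (by omega), Nat.mod_eq_of_lt (by omega), hμg (p + s0) (by omega),
        show t - 1 + (p + s0) = j by omega]
      exact wj
    have hE3 : μ[s0]? = some (!c) := by
      rw [hμg s0 (by omega), show t - 1 + s0 = j - p by omega]
      obtain ⟨b, hb⟩ := get?_exists (show j - p < w.length by omega)
      have hbc : b ≠ c := by
        intro hbc
        apply hmis
        rw [wj, hb, hbc]
      rw [hb]
      congr 1
      cases b <;> cases c <;> simp_all
    rcases lt_trichotomy s s0 with hss | hss | hss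
    · have hh := hE1 s hss
      rw [hμs, hρs] at hh
      simp at hh
    · rw [hss, hE3] at hμs
      simp at hμs
    · have hh := hag s0 hss
      rw [hE3, hE2] at hh
      simp at hh

/-! ### assignment of a position to each run -/

def GoodAt (w : List Bool) (i j t : ℕ) : Prop :=
  IsRun w i j ∧ i < t ∧
  ∃ (c : Bool) (v : List Bool),
    v.length = leastPeriod (factor w i j) ∧
    t + v.length - 1 ≤ j ∧
    (∀ k, k < v.length → v[k]? = w[t - 1 + k]?) ∧
    LynB c v ∧
    (∀ m, v.length < m → t + m - 1 ≤ w.length → ¬ LynB c (factor w t (t + m - 1)))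

lemma run_good {w : List Bool} {i j : ℕ} (hr : IsRun w i j) : ∃ t, GoodAt w i j t := by
  have h1 : 1 ≤ i := hr.1
  have hij : i < j := hr.2.1
  have hjn : j ≤ w.length := hr.2.2.1
  have h2p : 2 * leastPeriod (factor w i j) ≤ j - i + 1 := hr.2.2.2.1
  set p := leastPeriod (factor w i j) with hpdef
  have hp1 : 1 ≤ p := leastPeriod_pos _
  have hpj : i + 2 * p - 1 ≤ j := by omega
  obtain ⟨c, hc⟩ : ∃ c, j < w.length → w[j]? = some c := by
    by_cases h : j < w.length
    · obtain ⟨b, hb⟩ := get?_exists h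
      exact ⟨b, fun _ => hb⟩
    · exact ⟨false, fun hh => absurd hh h⟩
  set F : ℕ → List Bool := fun d => factor w (i + d) (i + d + p - 1) with hF
  have hFlen : ∀ d, d < p → (F d).length = p := by
    intro d hd
    rw [hF]
    dsimp only
    rw [factor_length (by omega) (by omega) (by omega)]
    omega
  have hFg_raw : ∀ d, d < p → ∀ k, k < p → (F d)[k]? = w[i + d - 1 + k]? := by
    intro d hd k hk
    rw [hF]
    dsimp only
    rw [factor_get? (by omega) (by omega) (by omega)]
  have hFg : ∀ d, d < p → ∀ k, k < p → (F d)[k]? = w[i - 1 + (d + k) % p]? := by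
    intro d hd k hk
    rw [hFg_raw d hd k hk, show i + d - 1 + k = i - 1 + (d + k) by omega]
    exact run_mod hr (d + k) (by omega)
  have hmodhelp : ∀ a y : ℕ, a < p → y < p → (a + (y + (p - a)) % p) % p = y := by
    intro a y ha hy
    rw [Nat.add_mod_mod, show a + (y + (p - a)) = y + p by omega, Nat.add_mod_right,
      Nat.mod_eq_of_lt hy]
  have htie : ∀ a b, a < p → b < p → F a = F b → a = b := by
    intro a b ha hb hab
    by_contra hne
    set δ := (p + b - a) % p with hδ
    have hδp : δ < p := Nat.mod_lt _ (by omega)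
    have hδ0 : 0 < δ := by
      rcases Nat.eq_zero_or_pos δ with h0 | h0
      · exfalso
        have hdvd : p ∣ (p + b - a) := Nat.dvd_of_mod_eq_zero h0
        obtain ⟨q, hq⟩ := hdvd
        have hlt2 : p * q < p * 2 := by omega
        have hq2 : q < 2 := Nat.lt_of_mul_lt_mul_left hlt2
        have hq0 : q ≠ 0 := by
          intro hz
          rw [hz, Nat.mul_zero] at hq
          omega
        have hq1 : q = 1 := by omega
        rw [hq1, Nat.mul_one] at hq
        omega
      · exact h0
    have hpoint : ∀ k, k < p →
        w[i - 1 + (a + k) % p]? = w[i - 1 + (b + k) % p]? := by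
      intro k hk
      rw [← hFg a ha k hk, ← hFg b hb k hk, hab]
    have htiepoint : ∀ y, y < p → w[i - 1 + y]? = w[i - 1 + (y + δ) % p]? := by
      intro y hy
      have hh := hpoint ((y + (p - a)) % p) (Nat.mod_lt _ (by omega))
      rw [hmodhelp a y ha hy] at hh
      rw [hh]
      congr 2
      rw [Nat.add_mod_mod, hδ, Nat.add_mod_mod,
        show b + (y + (p - a)) = y + (p + b - a) by omega]
    have hperδ : ∀ x, i - 1 ≤ x → x + δ < j → w[x]? = w[x + δ]? := by
      intro x hx hxδ
      have hx' : x - (i - 1) < j + 1 - i := by omega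
      rw [show x = i - 1 + (x - (i - 1)) by omega, run_mod hr _ hx',
        htiepoint _ (Nat.mod_lt _ (by omega)), Nat.mod_add_mod,
        show i - 1 + (x - (i - 1)) + δ = i - 1 + (x - (i - 1) + δ) by omega,
        run_mod hr (x - (i - 1) + δ) (by omega)]
    have hmin := run_min hr hδ0 hperδ
    omega
  obtain ⟨d, hd, hmin⟩ := exists_min c F p hp1
  have hlyn : LynB c (F d) := by
    intro e he1 he2
    rw [hFlen d hd] at he2
    have hd1 : (d + e) % p < p := Nat.mod_lt _ (by omega)
    have hdne : (d + e) % p ≠ d := by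
      intro hmod
      have hmeq : (d + e) % p = d % p := by rw [hmod, Nat.mod_eq_of_lt hd]
      have hdvd : p ∣ (d + e - d) := (Nat.modEq_iff_dvd' (by omega)).mp hmeq.symm
      rw [Nat.add_sub_cancel_left] at hdvd
      have := Nat.le_of_dvd he1 hdvd
      omega
    have hrotF : rot e (F d) = F ((d + e) % p) := by
      apply List.ext_getElem?
      intro k
      by_cases hk : k < p
      · rw [rot_get? (by rw [hFlen d hd]; omega) (by rw [hFlen d hd]; omega), hFlen d hd,
          hFg d hd ((e + k) % p) (Nat.mod_lt _ (by omega)),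
          hFg ((d + e) % p) hd1 k hk]
        congr 2
        rw [Nat.add_mod_mod, Nat.mod_add_mod, Nat.add_assoc]
      · rw [List.getElem?_eq_none_iff.2 (by rw [rot_length, hFlen d hd]; omega),
          List.getElem?_eq_none_iff.2 (by rw [hFlen _ hd1]; omega)]
    have hneF : F ((d + e) % p) ≠ F d := fun hEq => hdne (htie _ _ hd1 hd hEq)
    rcases before_total (c := c) (by rw [hFlen _ hd1, hFlen d hd]) hneF with hB | hB
    · exact absurd hB (hmin _ hd1)
    · rw [hrotF]
      exact hB
  have hgood : ∀ t, i < t → t + p - 1 ≤ j →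
      (∀ k, k < p → (F d)[k]? = w[t - 1 + k]?) → GoodAt w i j t := by
    intro t hti htj hOcc
    refine ⟨hr, hti, c, F d, by rw [hFlen d hd], by rw [hFlen d hd]; exact htj,
      fun k hk => by rw [hFlen d hd] at hk; exact hOcc k hk, hlyn,
      fun m hm hmn => ?_⟩
    rw [hFlen d hd] at hm
    exact run_longest hr hc hti (by omega) (by omega) hmn
  by_cases h0 : d = 0
  · refine ⟨i + p, hgood (i + p) (by omega) (by omega) ?_⟩
    intro k hk
    rw [hFg_raw d hd k hk, h0]
    have hh := run_per hr (i - 1 + k) (by omega) (by omega)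
    rw [show i + 0 - 1 + k = i - 1 + k by omega, hh]
    congr 1
    omega
  · refine ⟨i + d, hgood (i + d) (by omega) (by omega) ?_⟩
    intro k hk
    rw [hFg_raw d hd k hk]

lemma run_unique {w : List Bool} {i j i' j' t p : ℕ} (hr : IsRun w i j) (hr' : IsRun w i' j')
    (hp : leastPeriod (factor w i j) = p) (hp' : leastPeriod (factor w i' j') = p)
    (hti : i < t) (hti' : i' < t) (htj : t + p - 1 ≤ j) (htj' : t + p - 1 ≤ j') :
    i = i' ∧ j = j' := by
  have hp1 : 1 ≤ p := by rw [← hp]; exact leastPeriod_pos _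
  have h1 : 1 ≤ i := hr.1
  have h1' : 1 ≤ i' := hr'.1
  have hjn : j ≤ w.length := hr.2.2.1
  have hjn' : j' ≤ w.length := hr'.2.2.1
  have hper := run_per hr
  rw [hp] at hper
  have hper' := run_per hr'
  rw [hp'] at hper'
  have hii : i = i' := by
    rcases lt_trichotomy i i' with h | h | h
    · exfalso
      have hbd := hr'.2.2.2.2.1
      rw [hp'] at hbd
      rcases hbd with hb1 | hmis
      · omega
      · exact hmis (hper (i' - 2) (by omega) (by omega))
    · exact h
    · exfalso
      have hbd := hr.2.2.2.2.1
      rw [hp] at hbd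
      rcases hbd with hb1 | hmis
      · omega
      · exact hmis (hper' (i - 2) (by omega) (by omega))
  refine ⟨hii, ?_⟩
  subst hii
  rcases lt_trichotomy j j' with h | h | h
  · exfalso
    have hbd := hr.2.2.2.2.2
    rw [hp] at hbd
    rcases hbd with hb1 | hmis
    · omega
    · apply hmis
      have hh := hper' (j - p) (by omega) (by omega)
      rw [show j - p + p = j by omega] at hh
      exact hh.symm
  · exact h
  · exfalso
    have hbd := hr'.2.2.2.2.2
    rw [hp'] at hbd
    rcases hbd with hb1 | hmis
    · omega
    · apply hmis
      have hh := hper (j' - p) (by omega) (by omega)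
      rw [show j' - p + p = j' by omega] at hh
      exact hh.symm

lemma goodAt_bounds {w : List Bool} {i j t : ℕ} (h : GoodAt w i j t) :
    2 ≤ t ∧ t ≤ w.length := by
  obtain ⟨hr, hti, c, v, hvlen, htj, _, _, _⟩ := h
  have hp1 : 1 ≤ v.length := by rw [hvlen]; exact leastPeriod_pos _
  have h1 : 1 ≤ i := hr.1
  have hjn : j ≤ w.length := hr.2.2.1
  omega

lemma goodAt_inj_core {w : List Bool} {i j i' j' t : ℕ} (h : GoodAt w i j t)
    (h' : GoodAt w i' j' t)
    (hle : leastPeriod (factor w i j) ≤ leastPeriod (factor w i' j')) :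
    i = i' ∧ j = j' := by
  obtain ⟨hr, hti, c, v, hvlen, htj, hocc, hlyn, hlong⟩ := h
  obtain ⟨hr', hti', c', v', hvlen', htj', hocc', hlyn', hlong'⟩ := h'
  set p := leastPeriod (factor w i j) with hpd
  set p' := leastPeriod (factor w i' j') with hpd'
  have hp1 : 1 ≤ p := leastPeriod_pos _
  have hp1' : 1 ≤ p' := leastPeriod_pos _
  have h1 : 1 ≤ i := hr.1
  have h1' : 1 ≤ i' := hr'.1
  have hjn : j ≤ w.length := hr.2.2.1
  have hjn' : j' ≤ w.length := hr'.2.2.1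
  rcases eq_or_lt_of_le hle with heq | hlt
  · exact run_unique hr hr' rfl heq.symm hti hti' (by omega) (by omega)
  · exfalso
    have hp2' : 2 ≤ p' := by omega
    have hv'0 : v'[0]? = some c' := lyn_head hlyn' (by omega)
    have hw0 : w[t - 1]? = some c' := by
      have hh := (hocc' 0 (by omega)).symm.trans hv'0
      rwa [Nat.add_zero] at hh
    by_cases hp2 : 2 ≤ p
    · -- both long roots start with the small letter: orders agree
      have hv0 : v[0]? = some c := lyn_head hlyn (by omega)
      have hw0c : w[t - 1]? = some c := by
        have hh := (hocc 0 (by omega)).symm.trans hv0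
        rwa [Nat.add_zero] at hh
      have hcc : c = c' := by
        have hh := hw0c.symm.trans hw0
        simpa using hh
      have hfac : factor w t (t + p' - 1) = v' := by
        apply List.ext_getElem?
        intro k
        by_cases hk : k < p'
        · rw [factor_get? (by omega) (by omega) (by omega), hocc' k (by omega)]
        · rw [List.getElem?_eq_none_iff.2 (by rw [factor_length (by omega) (by omega) (by omega)]; omega),
            List.getElem?_eq_none_iff.2 (by omega)]
      have hnl := hlong p' (by omega) (by omega)
      rw [hfac] at hnl
      rw [← hcc] at hlyn'
      exact hnl hlyn'
    · -- p = 1 : r is a constant run, contradiction with the last letter of v'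
      have hpp : p = 1 := by omega
      have h2t : 2 ≤ t := by omega
      have hA : w[t - 2]? = w[t - 1]? := by
        have hh := run_per hr (t - 2) (by omega) (by omega)
        rw [show t - 2 + leastPeriod (factor w i j) = t - 1 by omega] at hh
        exact hh
      have hlast : v'[p' - 1]? = some (!c') := by
        have := lyn_last hlyn' (by omega)
        rwa [hvlen'] at this
      have hwlast : w[t - 1 + (p' - 1)]? = some (!c') :=
        (hocc' (p' - 1) (by omega)).symm.trans hlast
      have hB := run_per hr' (t - 2) (by omega) (by omega)
      rw [show t - 2 + leastPeriod (factor w i' j') = t - 1 + (p' - 1) by omega,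
        hwlast, hA, hw0] at hB
      simp at hB

lemma goodAt_inj {w : List Bool} {i j i' j' t : ℕ} (h : GoodAt w i j t)
    (h' : GoodAt w i' j' t) : i = i' ∧ j = j' := by
  rcases le_total (leastPeriod (factor w i j)) (leastPeriod (factor w i' j')) with hle | hle
  · exact goodAt_inj_core h h' hle
  · obtain ⟨e1, e2⟩ := goodAt_inj_core h' h hle
    exact ⟨e1.symm, e2.symm⟩

lemma numRuns_lt {w : List Bool} (hw : 1 ≤ w.length) : numRuns w < w.length := by
  classical
  set S : Set (ℕ × ℕ) := {ij : ℕ × ℕ | IsRun w ij.1 ij.2} with hS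
  set f : ℕ × ℕ → ℕ :=
    fun r => if h : IsRun w r.1 r.2 then Classical.choose (run_good h) else 0 with hf
  have hfspec : ∀ r : ℕ × ℕ, r ∈ S → GoodAt w r.1 r.2 (f r) := by
    intro r hr
    have hrun : IsRun w r.1 r.2 := hr
    simp only [hf]
    rw [dif_pos hrun]
    exact Classical.choose_spec (run_good hrun)
  have hmaps : ∀ r ∈ S, f r ∈ Set.Icc 2 w.length := by
    intro r hr
    exact goodAt_bounds (hfspec r hr)
  have hinj : Set.InjOn f S := by
    intro r hr r' hr' heq
    have hg1 := hfspec r hr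
    have hg2 := hfspec r' hr'
    rw [heq] at hg1
    obtain ⟨e1, e2⟩ := goodAt_inj hg1 hg2
    exact Prod.ext e1 e2
  have hle : S.ncard ≤ (Set.Icc 2 w.length).ncard :=
    Set.ncard_le_ncard_of_injOn f hmaps hinj (Set.finite_Icc _ _)
  have hicc : (Set.Icc 2 w.length).ncard = w.length - 1 := by
    rw [Set.ncard_eq_toFinset_card']
    simp [Nat.card_Icc]
  have hnum : numRuns w = S.ncard := by rw [hS]; rfl
  omega
end RunsAux

/-- Every binary word of length `n ≥ 1` has fewer than `n` runs, hence
`ρ(n) < n`. -/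
theorem runs_lt_length :
    (∀ w : List Bool, 1 ≤ w.length → numRuns w < w.length) ∧
    (∀ n : ℕ, 1 ≤ n → rho n < n) := by
  refine ⟨fun w hw => RunsAux.numRuns_lt hw, fun n hn => ?_⟩
  have hne : {k | ∃ w : List Bool, w.length = n ∧ numRuns w = k}.Nonempty :=
    ⟨numRuns (List.replicate n false), List.replicate n false, by simp, rfl⟩
  have hbdd : ∀ k ∈ {k | ∃ w : List Bool, w.length = n ∧ numRuns w = k}, k ≤ n - 1 := by
    rintro k ⟨w, hwl, rfl⟩
    have hh := RunsAux.numRuns_lt (w := w) (by omega)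
    omega
  have hrho : rho n ≤ n - 1 := csSup_le hne hbdd
  omega
end

section
/- Let w be a binary word, let r = [s..e] be an interval in the range of R_w, and let p be the least period of w[s..e]. Say that a position i is a starting position of a ≺_c-Lyndon root of [s..e] if s ≤ i, i+p−1 ≤ e, and w[i..i+p−1] is ≺_c-Lyndon. Then for 1 < i ≤ |w|: R_w(i) = r if and only if one of the following holds: (A) e < |w|, s < i, and i is a starting position of the ≺_{w[e+1]}-Lyndon root of [s..e]; or (B) e = |w|, s < i, and i is a starting position of a ≺_0-Lyndon or a ≺_1-Lyndon root of [s..e]; or (C) s = i, e = |w|, and w[i..e] has period one. -/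
namespace LexDev
variable {c : Bool}

theorem lex_irrefl (u : List Bool) : ¬ LexLt c u u := by
  induction u with
  | nil => intro h; cases h
  | cons a t ih => intro h; cases h with
    | cons h => exact ih h
    | rel h => obtain ⟨h1, h2⟩ := h; subst h1; simp at h2

theorem lex_trans {u v z : List Bool} (h1 : LexLt c u v) (h2 : LexLt c v z) : LexLt c u z := by
  induction v generalizing u z with
  | nil => cases h1
  | cons b t ih =>
    cases h1 with
    | nil => cases h2 with
      | cons _ => exact List.Lex.nil
      | rel _ => exact List.Lex.nil
    | cons h1' => cases h2 with
      | cons h2' => exact List.Lex.cons (ih h1' h2')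
      | rel h2' => exact List.Lex.rel h2'
    | rel h1' => cases h2 with
      | cons h2' => exact List.Lex.rel h1'
      | rel h2' => exact absurd h2'.1 (by simp [h1'.2])

theorem lex_asymm {u v : List Bool} (h1 : LexLt c u v) (h2 : LexLt c v u) : False :=
  lex_irrefl u (lex_trans h1 h2)

theorem lex_total {u v : List Bool} (h : u ≠ v) : LexLt c u v ∨ LexLt c v u := by
  induction u generalizing v with
  | nil => cases v with
    | nil => exact absurd rfl h
    | cons b t => exact Or.inl List.Lex.nil
  | cons a t ih =>
    cases v with
    | nil => exact Or.inr List.Lex.nil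
    | cons b s =>
      by_cases hab : a = b
      · subst hab
        rcases ih (v := s) (by intro hts; exact h (by rw [hts])) with h' | h'
        · exact Or.inl (List.Lex.cons h')
        · exact Or.inr (List.Lex.cons h')
      · have hd : (a = c ∧ b = !c) ∨ (b = c ∧ a = !c) := by
          cases a <;> cases b <;> cases c <;> simp_all
        rcases hd with h' | h'
        · exact Or.inl (List.Lex.rel h')
        · exact Or.inr (List.Lex.rel h')

theorem lex_append_left_iff (t : List Bool) {u v : List Bool} :
    LexLt c (t ++ u) (t ++ v) ↔ LexLt c u v := by
  induction t with
  | nil => rfl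
  | cons a s ih =>
    constructor
    · intro h; cases h with
      | cons h' => exact ih.1 h'
      | rel h' => obtain ⟨h1, h2⟩ := h'; subst h1; simp at h2
    · intro h; exact List.Lex.cons (ih.2 h)

theorem lex_of_prefix {u v : List Bool} (h : u <+: v) (hne : u ≠ v) : LexLt c u v := by
  obtain ⟨t, rfl⟩ := h
  have ht : t ≠ [] := by rintro rfl; simp at hne
  have : LexLt c ([] : List Bool) t := by cases t with
    | nil => exact absurd rfl ht
    | cons a s => exact List.Lex.nil
  simpa using (lex_append_left_iff u).2 this

theorem not_lex_append_self (v z : List Bool) : ¬ LexLt c (v ++ z) v := by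
  intro h
  induction v with
  | nil => cases h
  | cons a t ih => cases h with
    | cons h' => exact ih h'
    | rel h' => obtain ⟨h1, h2⟩ := h'; subst h1; simp at h2

theorem lex_append_right_of_not_prefix {u v : List Bool} (z : List Bool)
    (h : LexLt c u v) (hp : ¬ u <+: v) : LexLt c (u ++ z) v := by
  induction u generalizing v with
  | nil => exact absurd (List.nil_prefix) hp
  | cons a t ih =>
    cases h with
    | cons h' => exact List.Lex.cons (ih h' (by intro hpre; exact hp (List.prefix_cons_inj a |>.2 hpre)))
    | rel h' => exact List.Lex.rel h'

theorem lex_append_left_of_not_prefix {u v : List Bool} (z : List Bool)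
    (h : LexLt c u v) (hp : ¬ u <+: v) : LexLt c u (v ++ z) := by
  induction u generalizing v with
  | nil => exact absurd (List.nil_prefix) hp
  | cons a t ih =>
    cases h with
    | cons h' => exact List.Lex.cons (ih h' (by intro hpre; exact hp (List.prefix_cons_inj a |>.2 hpre)))
    | rel h' => exact List.Lex.rel h'

theorem not_prefix_of_length_lt {u v : List Bool} (h : v.length < u.length) : ¬ u <+: v := by
  intro hp; exact absurd (hp.length_le) (by omega)

theorem lex_of_get? {u v : List Bool} (r : ℕ)
    (hpre : ∀ m, m < r → u[m]? = v[m]?)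
    (hu : u[r]? = some c) (hv : v[r]? = some (!c)) : LexLt c u v := by
  induction r generalizing u v with
  | zero =>
    cases u with
    | nil => simp at hu
    | cons a t => cases v with
      | nil => simp at hv
      | cons b s =>
        simp at hu hv
        exact List.Lex.rel ⟨hu, by simp [hv]⟩
  | succ n ih =>
    cases u with
    | nil => simp at hu
    | cons a t => cases v with
      | nil => simp at hv
      | cons b s =>
        have h0 := hpre 0 (by omega)
        simp at h0
        subst h0
        exact List.Lex.cons (ih (fun m hm => by
          have := hpre (m+1) (by omega); simpa using this) (by simpa using hu) (by simpa using hv))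

theorem lex_extract {u v : List Bool} (h : LexLt c u v) (hlen : v.length ≤ u.length) :
    ∃ ℓ, ℓ < v.length ∧ (∀ m, m < ℓ → u[m]? = v[m]?) ∧
      u[ℓ]? = some c ∧ v[ℓ]? = some (!c) := by
  induction u generalizing v with
  | nil => cases h; simp at hlen
  | cons a t ih =>
    cases h with
    | @cons _ _ s h' =>
      obtain ⟨ℓ, h1, h2, h3, h4⟩ := ih h' (by simpa using hlen)
      exact ⟨ℓ+1, by simpa using h1, fun m hm => by
        cases m with
        | zero => simp
        | succ n => simpa using h2 n (by omega), by simpa using h3, by simpa using h4⟩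
    | rel hrel =>
      exact ⟨0, by simp, by simp, by simp [hrel.1], by simp [hrel.2]⟩

end LexDev

namespace LexDev
variable {c : Bool} {u v : List Bool}

theorem lex_append_same {z x : List Bool} (hlen : x.length ≤ z.length) (h : LexLt c z x)
    (y y' : List Bool) : LexLt c (z ++ y) (x ++ y') := by
  obtain ⟨ℓ, hℓ, hagree, hzℓ, hxℓ⟩ := lex_extract h hlen
  exact lex_of_get? ℓ
    (fun m hm => by
      rw [List.getElem?_append_left (by omega), List.getElem?_append_left (by omega)]
      exact hagree m hm)
    (by rw [List.getElem?_append_left (by omega)]; exact hzℓ)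
    (by rw [List.getElem?_append_left hℓ]; exact hxℓ)

theorem lyndon_suffix_lt (h : IsLyndon c u) {x y : List Bool} (hu : u = x ++ y)
    (hx : x ≠ []) (hy : y ≠ []) : LexLt c u y := by
  have hylen : y.length < u.length := by
    rw [hu, List.length_append]
    have := List.length_pos_iff.2 hx; omega
  by_contra hncon
  rcases lex_total (c := c) (show u ≠ y by intro he; rw [he] at hylen; omega) with h' | h'
  · exact hncon h'
  by_cases hpre : y <+: u
  · obtain ⟨z, hz⟩ := hpre
    have hzne : z ≠ [] := by
      intro hz0; rw [hz0, List.append_nil] at hz; rw [← hz] at hylen; omega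
    obtain ⟨hne1, hlex1⟩ := h.2 x y hx hy hu
    obtain ⟨hne2, hlex2⟩ := h.2 y z hy hzne hz.symm
    have hzx : LexLt c z x := by
      have : LexLt c (y ++ z) (y ++ x) := by rw [hz]; exact hlex1
      exact (lex_append_left_iff y).1 this
    have hlen : x.length ≤ z.length := by
      have h1 : u.length = y.length + z.length := by rw [← hz, List.length_append]
      have h2 : u.length = x.length + y.length := by rw [hu, List.length_append]
      omega
    have : LexLt c (z ++ y) (x ++ y) := lex_append_same hlen hzx y y
    rw [← hu] at this
    exact lex_asymm hlex2 this
  · have : LexLt c (y ++ x) u := lex_append_right_of_not_prefix x h' hpre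
    exact lex_asymm (h.2 x y hx hy hu).2 this

theorem lyndon_of_suffix (hne : u ≠ [])
    (hs : ∀ x y, x ≠ [] → y ≠ [] → u = x ++ y → LexLt c u y) : IsLyndon c u := by
  refine ⟨hne, fun x y hx hy hu => ?_⟩
  have hlt := hs x y hx hy hu
  have hylen : y.length < u.length := by
    rw [hu, List.length_append]; have := List.length_pos_iff.2 hx; omega
  have hpre : ¬ u <+: y := not_prefix_of_length_lt hylen
  constructor
  · intro he
    rw [he] at hlt
    exact not_lex_append_self y x hlt
  · exact lex_append_left_of_not_prefix x hlt hpre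

theorem lyndon_singleton (c a : Bool) : IsLyndon c [a] := by
  refine ⟨by simp, fun x y hx hy hxy => ?_⟩
  have : x.length + y.length = 1 := by
    have := congrArg List.length hxy; simpa [List.length_append] using this.symm
  have hx1 := List.length_pos_iff.2 hx
  have hy1 := List.length_pos_iff.2 hy
  omega

theorem lyndon_period_false (h : IsLyndon c u) (hq : IsPeriod u q) (hlt : q < u.length) :
    False := by
  have hq1 : 1 ≤ q := hq.1
  set n := u.length with hn
  have hyeq : u.drop q = u.take (n - q) := by
    apply List.ext_getElem?
    intro m
    by_cases hm : m < n - q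
    · rw [List.getElem?_drop, List.getElem?_take_of_lt hm, Nat.add_comm]
      exact (hq.2 m (by omega)).symm
    · have e1 : (u.drop q)[m]? = none := List.getElem?_eq_none_iff.2 (by simp [hn]; omega)
      have e2 : (u.take (n - q))[m]? = none := List.getElem?_eq_none_iff.2 (by
        rw [List.length_take]; omega)
      rw [e1, e2]
  obtain ⟨hne1, hlex1⟩ := h.2 (u.take q) (u.drop q)
    (List.length_pos_iff.1 (by rw [List.length_take]; omega))
    (List.length_pos_iff.1 (by rw [List.length_drop]; omega))
    (List.take_append_drop q u).symm
  obtain ⟨hne2, hlex2⟩ := h.2 (u.take (n - q)) (u.drop (n - q))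
    (List.length_pos_iff.1 (by rw [List.length_take]; omega))
    (List.length_pos_iff.1 (by rw [List.length_drop]; omega))
    (List.take_append_drop (n - q) u).symm
  have hu2 : u = u.drop q ++ u.drop (n - q) := by
    rw [hyeq]; exact (List.take_append_drop (n - q) u).symm
  have hzx : LexLt c (u.drop (n - q)) (u.take q) := by
    have h1 : LexLt c (u.drop q ++ u.drop (n - q)) (u.drop q ++ u.take q) := by
      rw [← hu2]; exact hlex1
    exact (lex_append_left_iff _).1 h1
  have hlen : (u.take q).length ≤ (u.drop (n - q)).length := by
    rw [List.length_take, List.length_drop]; omega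
  have hfin : LexLt c (u.drop (n - q) ++ u.take (n - q)) (u.take q ++ u.drop q) :=
    lex_append_same hlen hzx (u.take (n - q)) (u.drop q)
  rw [List.take_append_drop] at hfin
  exact lex_asymm hlex2 hfin

theorem not_lyndon_of {x : List Bool} (d r : ℕ) (hd : 0 < d)
    (hpre : ∀ ℓ, ℓ < r → x[ℓ]? = x[d + ℓ]?)
    (hr : x[r]? = some (!c)) (hdr : x[d + r]? = some c) : ¬ IsLyndon c x := by
  intro h
  have hdrlen : d + r < x.length := by
    rcases List.getElem?_eq_some_iff.1 hdr with ⟨h', _⟩; exact h'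
  have h1 : LexLt c x (x.drop d) := lyndon_suffix_lt h (List.take_append_drop d x).symm
    (List.length_pos_iff.1 (by rw [List.length_take]; omega))
    (List.length_pos_iff.1 (by rw [List.length_drop]; omega))
  have h2 : LexLt c (x.drop d) x := lex_of_get? r
    (fun m hm => by rw [List.getElem?_drop]; exact (hpre m hm).symm)
    (by rw [List.getElem?_drop]; exact hdr) hr
  exact lex_asymm h1 h2

end LexDev
namespace LexDev
variable {c : Bool} {u v : List Bool}

theorem drop_append_ge (u v : List Bool) (d : ℕ) (h : u.length ≤ d) :
    (u ++ v).drop d = v.drop (d - u.length) := by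
  rw [List.drop_append]; simp [List.drop_eq_nil_of_le h]

theorem lyndon_get_head (h : IsLyndon c u) (h2 : 2 ≤ u.length) : u[0]? = some c := by
  obtain ⟨a, t, rfl⟩ : ∃ a t, u = a :: t := by
    cases u with
    | nil => simp at h2
    | cons a t => exact ⟨a, t, rfl⟩
  have htne : t ≠ [] := by intro h0; rw [h0] at h2; simp at h2
  rcases Bool.eq_or_eq_not a c with hac | hac
  · simp [hac]
  exfalso
  by_cases hc : c ∈ t
  · obtain ⟨t₁, t₂, ht⟩ := List.mem_iff_append.1 hc
    have hu : a :: t = (a :: t₁) ++ (c :: t₂) := by simp [ht]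
    have hlt := lyndon_suffix_lt h hu (List.cons_ne_nil _ _) (List.cons_ne_nil _ _)
    cases hlt with
    | cons h' => exact absurd hac (by simp)
    | rel h' => rw [hac] at h'; simp at h'
  · have hrep : t = List.replicate t.length (!c) := List.eq_replicate_of_mem (fun b hb => by
      rcases Bool.eq_or_eq_not b c with hbc | hbc
      · exact absurd (hbc ▸ hb) hc
      · exact hbc)
    have hsplit := h.2 [a] t (by simp) htne rfl
    apply hsplit.1
    rw [hac, hrep]
    rw [← List.replicate_succ, ← List.replicate_succ']


theorem lyndon_get_last (h : IsLyndon c u) (h2 : 2 ≤ u.length) :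
    u[u.length - 1]? = some (!c) := by
  have hne := h.1
  set last := u.getLast hne with hlast
  have hu : u = u.dropLast ++ [last] := (List.dropLast_append_getLast hne).symm
  have hg : u[u.length - 1]? = some last := by
    have h3 := List.getElem?_concat_length (l := u.dropLast) (a := last)
    rw [← hu, List.length_dropLast] at h3
    exact h3
  rcases Bool.eq_or_eq_not last c with hlc | hlc
  · exfalso
    have hlt := lyndon_suffix_lt h hu
      (by intro h0; have := congrArg List.length h0; rw [List.length_dropLast] at this
          simp at this; omega)
      (List.cons_ne_nil _ _)
    have hhead := lyndon_get_head h h2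
    obtain ⟨b, t, rfl⟩ : ∃ b t, u = b :: t := by
      cases u with
      | nil => simp at h2
      | cons b t => exact ⟨b, t, rfl⟩
    have hb : b = c := by simpa using hhead
    rw [hlc] at hlt
    cases hlt with
    | cons h' => cases h'
    | rel h' => rw [hb] at h'; simp at h'
  · rw [hlc] at hg; exact hg

theorem lyndon_append (hu : IsLyndon c u) (hv : IsLyndon c v) (huv : LexLt c u v) :
    IsLyndon c (u ++ v) := by
  have hune := hu.1
  have hvne := hv.1
  have hLuv : LexLt c (u ++ v) v := by
    by_cases hpre : u <+: v
    · obtain ⟨v₂, hv₂⟩ := hpre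
      have hv₂ne : v₂ ≠ [] := by
        intro h0; rw [h0, List.append_nil] at hv₂; rw [hv₂] at huv; exact lex_irrefl v huv
      have : LexLt c v v₂ := lyndon_suffix_lt hv hv₂.symm hune hv₂ne
      have h2 : LexLt c (u ++ v) (u ++ v₂) := (lex_append_left_iff u).2 this
      rwa [hv₂] at h2
    · exact lex_append_right_of_not_prefix v huv hpre
  apply lyndon_of_suffix (by simp [hune])
  intro x y hx hy hxy
  have hd : y = (u ++ v).drop x.length := by rw [hxy, List.drop_left]
  have hxlen := List.length_pos_iff.2 hx
  have hylen := List.length_pos_iff.2 hy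
  have htot : x.length + y.length = u.length + v.length := by
    have := congrArg List.length hxy; simpa [List.length_append] using this.symm
  by_cases hcase : x.length < u.length
  · have hy2 : y = u.drop x.length ++ v := by
      rw [hd, List.drop_append_of_le_length (le_of_lt hcase)]
    have hu₂ne : u.drop x.length ≠ [] :=
      List.length_pos_iff.1 (by rw [List.length_drop]; omega)
    have hlex : LexLt c u (u.drop x.length) := lyndon_suffix_lt hu
      (List.take_append_drop x.length u).symm
      (List.length_pos_iff.1 (by rw [List.length_take]; omega)) hu₂ne
    have : LexLt c (u ++ v) (u.drop x.length ++ v) :=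
      lex_append_same (by rw [List.length_drop]; omega) hlex v v
    rwa [← hy2] at this
  · have hy2 : y = v.drop (x.length - u.length) := by
      rw [hd, drop_append_ge u v _ (by omega)]
    by_cases hk : x.length = u.length
    · rw [hy2, hk, Nat.sub_self, List.drop_zero]; exact hLuv
    · have hyne2 : v.drop (x.length - u.length) ≠ [] := hy2 ▸ hy
      have : LexLt c v y := by
        rw [hy2]
        exact lyndon_suffix_lt hv (List.take_append_drop (x.length - u.length) v).symm
          (List.length_pos_iff.1 (by rw [List.length_take]; omega)) hyne2
      exact lex_trans hLuv this

theorem lyndon_take_snoc {r : ℕ} (hv : IsLyndon c v) (hr : r < v.length)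
    (hc : v[r]? = some c) : IsLyndon c (v.take r ++ [!c]) := by
  have htr : (v.take r).length = r := by rw [List.length_take]; omega
  apply lyndon_of_suffix (by simp)
  intro x y hx hy hxy
  set d := x.length with hdx
  have hxlen := List.length_pos_iff.2 hx
  have hylen := List.length_pos_iff.2 hy
  have htot : x.length + y.length = r + 1 := by
    have := congrArg List.length hxy
    simp [List.length_append, htr] at this; omega
  have hdr : d ≤ r := by omega
  have hd1 : 1 ≤ d := hxlen
  have hr1 : 1 ≤ r := by omega
  have hv2 : 2 ≤ v.length := by omega
  have hy2 : y = (v.take r).drop d ++ [!c] := by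
    have : y = ((v.take r) ++ [!c]).drop d := by rw [hxy, List.drop_left]
    rw [this, List.drop_append_of_le_length (by omega)]
  have hlen2 : ((v.take r).drop d).length = r - d := by
    rw [List.length_drop, htr]
  -- z get facts
  have hzget : ∀ m, m < r → (v.take r ++ [!c])[m]? = v[m]? := fun m hm => by
    rw [List.getElem?_append_left (by omega), List.getElem?_take_of_lt hm]
  have hyget : ∀ m, m < r - d → y[m]? = v[d + m]? := fun m hm => by
    rw [hy2, List.getElem?_append_left (by omega), List.getElem?_drop, List.getElem?_take_of_lt (by omega)]
  have hylast : y[r - d]? = some (!c) := by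
    rw [hy2, ← hlen2, List.getElem?_concat_length]
  have hvd : LexLt c v (v.drop d) := lyndon_suffix_lt hv (List.take_append_drop d v).symm
    (List.length_pos_iff.1 (by rw [List.length_take]; omega))
    (List.length_pos_iff.1 (by rw [List.length_drop]; omega))
  obtain ⟨ℓ, hℓ, hag, hvℓ, hvdℓ⟩ := lex_extract hvd (by rw [List.length_drop]; omega)
  rw [List.length_drop] at hℓ
  rw [List.getElem?_drop] at hvdℓ
  by_cases hcase : ℓ < r - d
  · exact lex_of_get? ℓ
      (fun m hm => by
        rw [hzget m (by omega), hyget m (by omega)]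
        have := hag m hm; rw [List.getElem?_drop] at this; exact this)
      (by rw [hzget ℓ (by omega)]; exact hvℓ)
      (by rw [hyget ℓ hcase]; exact hvdℓ)
  · have hkey : v[r - d]? = some c := by
      by_cases hℓeq : ℓ = r - d
      · rw [← hℓeq]; exact hvℓ
      · have := hag (r - d) (by omega)
        rw [List.getElem?_drop] at this
        rw [this, show d + (r - d) = r by omega]; exact hc
    exact lex_of_get? (r - d)
      (fun m hm => by
        rw [hzget m (by omega), hyget m hm]
        have := hag m (by omega); rw [List.getElem?_drop] at this; exact this)
      (by rw [hzget (r - d) (by omega)]; exact hkey)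
      hylast

end LexDev

namespace LexDev

/-- 1-based letter access. -/
def wAt (w : List Bool) (x : ℕ) : Bool := w.getD (x - 1) false

/-- `q` is a period of `w` on the (1-based, inclusive) interval `[a..b]`. -/
def PerOn (w : List Bool) (a b q : ℕ) : Prop :=
  ∀ x, a ≤ x → x + q ≤ b → wAt w x = wAt w (x + q)

variable {w : List Bool} {a b q : ℕ}

theorem get?_wAt (hx : 1 ≤ x) (hxn : x ≤ w.length) : w[x - 1]? = some (wAt w x) := by
  have h : x - 1 < w.length := by omega
  rw [wAt, List.getD_eq_getElem?_getD, List.getElem?_eq_getElem h]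
  rfl

theorem factor_length (ha : 1 ≤ a) (hb : b ≤ w.length) :
    (factor w a b).length = b + 1 - a := by
  rw [factor, List.length_take, List.length_drop]; omega

theorem factor_get? (ha : 1 ≤ a) (hb : b ≤ w.length) {t : ℕ} (ht : t < b + 1 - a) :
    (factor w a b)[t]? = some (wAt w (a + t)) := by
  rw [factor, List.getElem?_take_of_lt ht, List.getElem?_drop]
  have : a - 1 + t = (a + t) - 1 := by omega
  rw [this]
  exact get?_wAt (by omega) (by omega)

theorem isPeriod_factor_iff (ha : 1 ≤ a) (hb : b ≤ w.length) :
    IsPeriod (factor w a b) q ↔ (1 ≤ q ∧ PerOn w a b q) := by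
  constructor
  · rintro ⟨hq, hP⟩
    refine ⟨hq, fun x hx hxq => ?_⟩
    have hk := hP (x - a) (by rw [factor_length ha hb]; omega)
    rw [show x - a + q = (x + q) - a by omega] at hk
    rw [factor_get? ha hb (by omega), factor_get? ha hb (by omega)] at hk
    rw [show a + (x - a) = x by omega, show a + (x + q - a) = x + q by omega] at hk
    exact Option.some.inj hk
  · rintro ⟨hq, hP⟩
    refine ⟨hq, fun k hk => ?_⟩
    rw [factor_length ha hb] at hk
    rw [factor_get? ha hb (by omega), factor_get? ha hb (by omega)]
    rw [show a + (k + q) = (a + k) + q by omega]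
    exact congrArg some (hP (a + k) (by omega) (by omega))

theorem perOn_mono {a' b' : ℕ} (h : PerOn w a b q) (ha : a ≤ a') (hb : b' ≤ b) :
    PerOn w a' b' q := fun x hx hxq => h x (by omega) (by omega)

theorem perOn_glue {a' b' : ℕ} (h1 : PerOn w a b q) (h2 : PerOn w a' b' q)
    (haa : a ≤ a') (hab : a' + q ≤ b + 1) (hbb : b ≤ b') : PerOn w a b' q := by
  intro x hx hxq
  by_cases hxb : x + q ≤ b
  · exact h1 x hx hxb
  · exact h2 x (by omega) hxq

theorem perOn_mul (h : PerOn w a b q) : ∀ m x, a ≤ x → x + m * q ≤ b →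
    wAt w x = wAt w (x + m * q) := by
  intro m
  induction m with
  | zero => simp
  | succ n ih =>
    intro x hx hxq
    have hq0 : x + q ≤ b := by nlinarith [Nat.succ_mul n q]
    calc wAt w x = wAt w (x + q) := h x hx (by
          have : q ≤ (n+1) * q := Nat.le_mul_of_pos_left q (by omega)
          omega)
      _ = wAt w (x + q + n * q) := ih (x + q) (by omega) (by
          have : x + q + n * q = x + (n+1) * q := by ring
          omega)
      _ = wAt w (x + (n + 1) * q) := by congr 1; ring

theorem perOn_congr {x y : ℕ} (h : PerOn w a b q) (hx : a ≤ x) (hxy : x ≤ y) (hy : y ≤ b)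
    (hdvd : q ∣ (y - x)) : wAt w x = wAt w y := by
  obtain ⟨m, hm⟩ := hdvd
  rw [Nat.mul_comm q m] at hm
  have hy' : y = x + m * q := by omega
  rw [hy']
  exact perOn_mul h m x hx (by omega)

theorem factor_append {d : ℕ} (ha : 1 ≤ a) (hab : a ≤ b + 1) (hbd : b ≤ d) :
    factor w a d = factor w a b ++ factor w (b + 1) d := by
  unfold factor
  rw [show d + 1 - a = (b + 1 - a) + (d - b) by omega, List.take_add, List.drop_drop,
    show a - 1 + (b + 1 - a) = b by omega, show b + 1 - 1 = b by omega,
    show d + 1 - (b + 1) = d - b by omega]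

theorem factor_single (ha : 1 ≤ a) (hb : a ≤ w.length) : factor w a a = [wAt w a] := by
  apply List.ext_getElem?
  intro m
  match m with
  | 0 => rw [factor_get? ha hb (by omega)]; simp
  | (n+1) =>
    rw [List.getElem?_eq_none_iff.2 (by rw [factor_length ha hb]; omega),
      List.getElem?_eq_none_iff.2 (by simp)]

end LexDev

namespace LexDev
variable {c : Bool} {v : List Bool}

theorem length_flatten_replicate (m : ℕ) (v : List Bool) :
    ((List.replicate m v).flatten).length = m * v.length := by
  induction m with
  | zero => simp
  | succ n ih => rw [List.replicate_succ, List.flatten_cons, List.length_append, ih]; ring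

theorem get?_flatten_replicate_append (m : ℕ) (v z : List Bool) :
    ∀ t, t < m * v.length → ((List.replicate m v).flatten ++ z)[t]? = v[t % v.length]? := by
  induction m with
  | zero => intro t ht; simp at ht
  | succ n ih =>
    intro t ht
    have ht' : t < n * v.length + v.length := by simpa [Nat.succ_mul] using ht
    rw [List.replicate_succ, List.flatten_cons, List.append_assoc]
    by_cases htv : t < v.length
    · rw [List.getElem?_append_left htv, Nat.mod_eq_of_lt htv]
    · push_neg at htv
      have hv0 : 0 < v.length := by
        rcases Nat.eq_zero_or_pos v.length with h0 | h0
        · rw [h0] at ht'; simp at ht'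
        · exact h0
      rw [List.getElem?_append_right htv, ih (t - v.length) (by omega)]
      congr 1
      conv_rhs => rw [show t = (t - v.length) + v.length by omega]
      rw [Nat.add_mod_right]

theorem pow_lyndon {r : ℕ} (hv : IsLyndon c v) (hr : r < v.length) (hc : v[r]? = some c) :
    ∀ m, IsLyndon c ((List.replicate m v).flatten ++ (v.take r ++ [!c])) := by
  have hltr : (v.take r).length = r := by rw [List.length_take]; omega
  intro m
  induction m with
  | zero =>
    simpa using lyndon_take_snoc hv hr hc
  | succ n ih =>
    rw [List.replicate_succ, List.flatten_cons, List.append_assoc]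
    apply lyndon_append hv ih
    cases n with
    | zero =>
      simp only [List.replicate_zero, List.flatten_nil, List.nil_append]
      refine lex_of_get? r (fun m hm => by
        rw [List.getElem?_append_left (by rw [List.length_take]; omega), List.getElem?_take_of_lt hm]) hc ?_
      have hcl := List.getElem?_concat_length (l := v.take r) (a := !c)
      rw [hltr] at hcl
      exact hcl
    | succ n' =>
      apply lex_of_prefix
      · rw [List.replicate_succ, List.flatten_cons, List.append_assoc]
        exact List.prefix_append _ _
      · intro he
        have hlen := congrArg List.length he
        rw [List.length_append, length_flatten_replicate, List.length_append, hltr] at hlen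
        have hv0 : 0 < v.length := List.length_pos_iff.2 hv.1
        have hsm : (n' + 1) * v.length = n' * v.length + v.length := by ring
        simp at hlen
        omega

/-- Duval extension. -/
theorem duval_ext {w : List Bool} {i e p : ℕ} {c : Bool} (hi : 1 ≤ i) (hp1 : 1 ≤ p)
    (hip : i + p ≤ e + 1) (hen : e + 1 ≤ w.length)
    (hv : IsLyndon c (factor w i (i + p - 1)))
    (hper : PerOn w i e p)
    (hml : wAt w (i + (e + 1 - i) % p) = c)
    (hext : wAt w (e + 1) = !c) :
    IsLyndon c (factor w i (e + 1)) := by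
  set v := factor w i (i + p - 1) with hvdef
  have hvlen : v.length = p := by rw [hvdef, factor_length hi (by omega)]; omega
  set r := (e + 1 - i) % p with hrdef
  set m := (e + 1 - i) / p with hmdef
  have hdiv : m * p + r = e + 1 - i := by
    rw [hrdef, hmdef, Nat.mul_comm]; exact Nat.div_add_mod _ _
  have hrp : r < p := Nat.mod_lt _ (by omega)
  have hltr : (v.take r).length = r := by rw [List.length_take]; omega
  have hvr : v[r]? = some c := by
    rw [hvdef, factor_get? hi (by omega) (by omega)]
    rw [← hml]
  have hkey : factor w i (e + 1) = (List.replicate m v).flatten ++ (v.take r ++ [!c]) := by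
    apply List.ext_getElem?
    intro t
    by_cases htlen : t < e + 2 - i
    · rw [factor_get? hi hen (by omega)]
      by_cases ht1 : t < m * p
      · have htp : t % p < p := Nat.mod_lt _ (by omega)
        have htple : t % p ≤ t := Nat.mod_le _ _
        rw [get?_flatten_replicate_append m v _ t (by rw [hvlen]; omega), hvlen,
          hvdef, factor_get? hi (by omega) (by omega)]
        congr 1
        refine (perOn_congr hper (by omega) (by omega) (by omega) ?_).symm
        rw [show i + t - (i + t % p) = t - t % p by omega]
        exact Nat.dvd_sub_mod t
      · push_neg at ht1
        rw [List.getElem?_append_right (by rw [length_flatten_replicate, hvlen]; omega),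
          length_flatten_replicate, hvlen]
        by_cases ht2 : t - m * p < r
        · rw [List.getElem?_append_left (by rw [hltr]; omega), List.getElem?_take_of_lt ht2,
            hvdef, factor_get? hi (by omega) (by omega)]
          congr 1
          refine (perOn_congr hper (by omega) (by omega) (by omega) ?_).symm
          rw [show i + t - (i + (t - m * p)) = m * p by omega]
          exact dvd_mul_left p m
        · have htr : t - m * p = r := by omega
          have hcl := List.getElem?_concat_length (l := v.take r) (a := !c)
          rw [hltr] at hcl
          rw [htr, hcl, show i + t = e + 1 by omega, hext]
    · push_neg at htlen
      rw [List.getElem?_eq_none_iff.2 (by rw [factor_length hi hen]; omega),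
        List.getElem?_eq_none_iff.2 (by
          rw [List.length_append, length_flatten_replicate, List.length_append, hltr, hvlen]
          simp
          omega)]
  rw [hkey]
  exact pow_lyndon hv (by omega) hvr m

end LexDev

namespace LexDev
variable {w : List Bool} {i s e p : ℕ}

theorem cpar_eq : cpar w i = !(wAt w (i - 1)) := by
  rw [cpar, wAt, Nat.sub_sub]

theorem getD_eq_wAt (e : ℕ) : w.getD e false = wAt w (e + 1) := by
  rw [wAt, Nat.add_sub_cancel]

theorem lpar_facts (h1 : 1 ≤ i) (h2 : i ≤ w.length) :
    i ≤ Lpar w i ∧ Lpar w i ≤ w.length ∧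
    IsLyndon (cpar w i) (factor w i (Lpar w i)) ∧
    ∀ j, j ≤ w.length → IsLyndon (cpar w i) (factor w i j) → j ≤ Lpar w i := by
  have hmem : i ∈ {j | j ≤ w.length ∧ IsLyndon (cpar w i) (factor w i j)} := by
    refine ⟨h2, ?_⟩
    rw [factor_single h1 h2]
    exact lyndon_singleton _ _
  have hbdd : BddAbove {j | j ≤ w.length ∧ IsLyndon (cpar w i) (factor w i j)} :=
    ⟨w.length, fun j hj => hj.1⟩
  have hs := Nat.sSup_mem ⟨i, hmem⟩ hbdd
  exact ⟨le_csSup hbdd hmem, hs.1, hs.2, fun j hj hLy => le_csSup hbdd ⟨hj, hLy⟩⟩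

theorem isPeriod_factor_self (h1 : 1 ≤ i) (h2 : Lpar w i ≤ w.length) (h3 : i ≤ Lpar w i) :
    IsPeriod (factor w i (Lpar w i)) (Dpar w i) := by
  constructor
  · rw [Dpar]; omega
  · intro k hk
    rw [factor_length h1 h2, Dpar] at hk
    omega

theorem epar_facts (h1 : 1 < i) (h2 : i ≤ w.length) :
    Lpar w i ≤ Epar w i ∧ Epar w i ≤ w.length ∧ PerOn w i (Epar w i) (Dpar w i) ∧
    ∀ j, j ≤ w.length → PerOn w i j (Dpar w i) → j ≤ Epar w i := by
  obtain ⟨hiL, hLn, _, _⟩ := lpar_facts (by omega : 1 ≤ i) h2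
  have hmem : Lpar w i ∈ {j | j ≤ w.length ∧ IsPeriod (factor w i j) (Dpar w i)} :=
    ⟨hLn, isPeriod_factor_self (by omega) hLn hiL⟩
  have hbdd : BddAbove {j | j ≤ w.length ∧ IsPeriod (factor w i j) (Dpar w i)} :=
    ⟨w.length, fun j hj => hj.1⟩
  have hs := Nat.sSup_mem ⟨_, hmem⟩ hbdd
  refine ⟨le_csSup hbdd hmem, hs.1, ?_, fun j hj hP => le_csSup hbdd ⟨hj,
    (isPeriod_factor_iff (by omega) hj).2 ⟨by rw [Dpar]; omega, hP⟩⟩⟩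
  exact ((isPeriod_factor_iff (by omega) hs.1).1 hs.2).2

theorem stpar_facts (h1 : 1 < i) (h2 : i ≤ w.length) :
    1 ≤ STpar w i ∧ STpar w i ≤ i ∧ PerOn w (STpar w i) (Lpar w i) (Dpar w i) ∧
    ∀ j, 1 ≤ j → PerOn w j (Lpar w i) (Dpar w i) → STpar w i ≤ j := by
  obtain ⟨hiL, hLn, _, _⟩ := lpar_facts (by omega : 1 ≤ i) h2
  have hmem : i ∈ {j | 1 ≤ j ∧ IsPeriod (factor w j (Lpar w i)) (Dpar w i)} :=
    ⟨by omega, isPeriod_factor_self (by omega) hLn hiL⟩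
  have hs := Nat.sInf_mem (⟨i, hmem⟩ : Set.Nonempty _)
  refine ⟨hs.1, Nat.sInf_le hmem, ?_, fun j hj hP => Nat.sInf_le ⟨hj,
    (isPeriod_factor_iff hj hLn).2 ⟨by rw [Dpar]; omega, hP⟩⟩⟩
  exact ((isPeriod_factor_iff hs.1 hLn).1 hs.2).2

/-- All the structural facts about `s`, `e`, `p` derivable from one preimage `k`. -/
theorem run_facts {k : ℕ} (hk1 : 1 < k) (hk2 : k ≤ w.length) (hR : Rmap w k = (s, e))
    (hp : IsLeastPeriod (factor w s e) p) :
    1 ≤ s ∧ s ≤ k ∧ s + p ≤ e + 1 ∧ e ≤ w.length ∧ 1 ≤ p ∧ PerOn w s e p ∧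
    (2 ≤ s → wAt w (s - 1) ≠ wAt w (s - 1 + p)) ∧
    (e < w.length → wAt w (e + 1 - p) ≠ wAt w (e + 1)) ∧
    p = Dpar w k := by
  have hST : STpar w k = s := congrArg Prod.fst hR
  have hE : Epar w k = e := congrArg Prod.snd hR
  obtain ⟨hkL, hLn, hLyn, hLmax⟩ := lpar_facts (by omega : 1 ≤ k) hk2
  obtain ⟨hLE, hEn, hEper, hEmax⟩ := epar_facts hk1 hk2
  obtain ⟨hST1, hSTk, hSTper, hSTmin⟩ := stpar_facts hk1 hk2
  rw [hST] at hST1 hSTk hSTper hSTmin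
  rw [hE] at hLE hEn hEper hEmax
  have hD1 : 1 ≤ Dpar w k := by rw [Dpar]; omega
  have hDse : PerOn w s e (Dpar w k) := by
    apply perOn_glue hSTper (perOn_mono hEper (le_refl k) (le_refl e)) hSTk _ hLE
    rw [Dpar]; omega
  have hpD : p ≤ Dpar w k :=
    hp.2 _ ((isPeriod_factor_iff hST1 hEn).2 ⟨hD1, hDse⟩)
  have hPp : PerOn w s e p := ((isPeriod_factor_iff hST1 hEn).1 hp.1).2
  have hp1 : 1 ≤ p := hp.1.1
  have hDp : p = Dpar w k := by
    by_contra hne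
    have hplt : p < Dpar w k := by omega
    have hkLper : PerOn w k (Lpar w k) p := perOn_mono hPp hSTk (by omega)
    exact lyndon_period_false hLyn ((isPeriod_factor_iff (by omega) hLn).2 ⟨hp1, hkLper⟩)
      (by rw [factor_length (by omega) hLn, Dpar] at *; omega)
  have hspe : s + p ≤ e + 1 := by rw [hDp, Dpar]; omega
  refine ⟨hST1, hSTk, hspe, hEn, hp1, hPp, ?_, ?_, hDp⟩
  · intro hs2
    have hnot : ¬ PerOn w (s - 1) (Lpar w k) (Dpar w k) := fun hcon =>
      absurd (hSTmin (s - 1) (by omega) hcon) (by omega)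
    rw [PerOn] at hnot
    push_neg at hnot
    obtain ⟨x, hx1, hx2, hx3⟩ := hnot
    have hxs : x = s - 1 := by
      by_contra hxs
      exact hx3 (hSTper x (by omega) hx2)
    rw [hxs, ← hDp] at hx3
    exact hx3
  · intro hen
    have hnot : ¬ PerOn w k (e + 1) (Dpar w k) := fun hcon =>
      absurd (hEmax (e + 1) (by omega) hcon) (by omega)
    rw [PerOn] at hnot
    push_neg at hnot
    obtain ⟨x, hx1, hx2, hx3⟩ := hnot
    have hxe : x + Dpar w k = e + 1 := by
      by_contra hxe
      exact hx3 (hEper x hx1 (by omega))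
    have hx : x = e + 1 - p := by omega
    rw [← hDp] at hx3
    rw [hx] at hx3
    rw [show e + 1 - p + p = e + 1 by omega] at hx3
    exact hx3

end LexDev

namespace LexDev
variable {w : List Bool} {i s e p : ℕ} {c : Bool}

/-- Computation of `STpar`/`Epar` once `Lpar w i = i + p - 1` is known. -/
theorem ste_eq (h1 : 1 < i) (h2 : i ≤ w.length) (hs1 : 1 ≤ s) (hen : e ≤ w.length)
    (hp1 : 1 ≤ p) (hPer : PerOn w s e p)
    (hML : 2 ≤ s → wAt w (s - 1) ≠ wAt w (s - 1 + p))
    (hMR : e < w.length → wAt w (e + 1 - p) ≠ wAt w (e + 1))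
    (hsi : s ≤ i) (hipe : i + p ≤ e + 1)
    (hL : Lpar w i = i + p - 1) : Rmap w i = (s, e) := by
  have hD : Dpar w i = p := by rw [Dpar, hL]; omega
  have hEmem : e ∈ {j | j ≤ w.length ∧ IsPeriod (factor w i j) (Dpar w i)} := by
    refine ⟨hen, (isPeriod_factor_iff (by omega) hen).2 ⟨by omega, ?_⟩⟩
    rw [hD]; exact perOn_mono hPer hsi (le_refl e)
  have hbddE : BddAbove {j | j ≤ w.length ∧ IsPeriod (factor w i j) (Dpar w i)} :=
    ⟨w.length, fun j hj => hj.1⟩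
  have hEub : ∀ j ∈ {j | j ≤ w.length ∧ IsPeriod (factor w i j) (Dpar w i)}, j ≤ e := by
    intro j hj
    have hjn : j ≤ w.length := hj.1
    by_contra hje
    push_neg at hje
    have hPj : PerOn w i j p := by
      rw [← hD]; exact ((isPeriod_factor_iff (by omega) hj.1).1 hj.2).2
    have hx := hPj (e + 1 - p) (by omega) (by omega)
    rw [show e + 1 - p + p = e + 1 by omega] at hx
    exact hMR (by omega) hx
  have hE : Epar w i = e := le_antisymm (csSup_le ⟨e, hEmem⟩ hEub) (le_csSup hbddE hEmem)
  have hLn : Lpar w i ≤ w.length := by omega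
  have hSmem : s ∈ {j | 1 ≤ j ∧ IsPeriod (factor w j (Lpar w i)) (Dpar w i)} := by
    refine ⟨hs1, (isPeriod_factor_iff hs1 hLn).2 ⟨by omega, ?_⟩⟩
    rw [hD, hL]
    exact perOn_mono hPer (le_refl s) (by omega)
  have hSlb : ∀ j ∈ {j | 1 ≤ j ∧ IsPeriod (factor w j (Lpar w i)) (Dpar w i)}, s ≤ j := by
    intro j hj
    have hj1 : 1 ≤ j := hj.1
    by_contra hjs
    push_neg at hjs
    have hPj : PerOn w j (Lpar w i) p := by
      rw [← hD]; exact ((isPeriod_factor_iff hj.1 hLn).1 hj.2).2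
    have hx := hPj (s - 1) (by omega) (by rw [hL]; omega)
    exact hML (by omega) hx
  have hS : STpar w i = s := le_antisymm (Nat.sInf_le hSmem) (le_csInf ⟨s, hSmem⟩ hSlb)
  rw [Rmap, hS, hE]

theorem wAt_root_pos (hPer : PerOn w s e p) (hp1 : 1 ≤ p) (hsi : s ≤ i)
    (hipe : i + p ≤ e + 1) : wAt w (i + (e + 1 - i) % p) = wAt w (e + 1 - p) := by
  set r := (e + 1 - i) % p with hr
  set m := (e + 1 - i) / p with hm
  have hdiv : m * p + r = e + 1 - i := by rw [hr, hm, Nat.mul_comm]; exact Nat.div_add_mod _ _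
  have hrp : r < p := Nat.mod_lt _ (by omega)
  have hm1 : 1 ≤ m := (Nat.one_le_div_iff (by omega)).2 (by omega)
  have hmp : p ≤ m * p := Nat.le_mul_of_pos_left p (by omega)
  apply perOn_congr hPer (by omega) (by omega) (by omega)
  rw [show e + 1 - p - (i + r) = m * p - 1 * p by rw [one_mul]; omega, ← Nat.sub_mul]
  exact dvd_mul_left p (m - 1)

/-- No factor `w[i..j]` with `j > i + p - 1` can be `≺_c`-Lyndon. -/
theorem not_lyndon_long (h1 : 1 ≤ i) (hs1 : 1 ≤ s) (hp1 : 1 ≤ p)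
    (hPer : PerOn w s e p) (hsi : s ≤ i) (hipe : i + p ≤ e + 1)
    (hext : e < w.length → wAt w (e + 1) = c ∧ wAt w (e + 1 - p) ≠ wAt w (e + 1)) :
    ∀ j, i + p - 1 < j → j ≤ w.length → ¬ IsLyndon c (factor w i j) := by
  intro j hj hjn hLy
  by_cases hje : j ≤ e
  · have hPj : PerOn w i j p := perOn_mono hPer hsi hje
    exact lyndon_period_false hLy ((isPeriod_factor_iff h1 hjn).2 ⟨hp1, hPj⟩)
      (by rw [factor_length h1 hjn]; omega)
  · push_neg at hje
    have hen : e < w.length := by omega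
    obtain ⟨hc, hmr⟩ := hext hen
    set r := (e + 1 - i) % p with hr
    set m := (e + 1 - i) / p with hm
    have hdiv : m * p + r = e + 1 - i := by rw [hr, hm, Nat.mul_comm]; exact Nat.div_add_mod _ _
    have hrp : r < p := Nat.mod_lt _ (by omega)
    have hm1 : 1 ≤ m := (Nat.one_le_div_iff (by omega)).2 (by omega)
    have hmp : p ≤ m * p := Nat.le_mul_of_pos_left p (by omega)
    have hroot : wAt w (i + r) = !c := by
      have h1' := wAt_root_pos hPer hp1 hsi hipe
      rw [← hr] at h1'
      rw [h1']
      rw [Bool.eq_not_iff]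
      intro hcc
      exact hmr (by rw [hcc, hc])
    refine not_lyndon_of (c := c) (m * p) r (by omega)
      (fun ℓ hℓ => ?_) ?_ ?_ hLy
    · rw [factor_get? h1 hjn (by omega), factor_get? h1 hjn (by omega)]
      congr 1
      apply perOn_congr hPer (by omega) (by omega) (by omega)
      rw [show i + (m * p + ℓ) - (i + ℓ) = m * p by omega]
      exact dvd_mul_left p m
    · rw [factor_get? h1 hjn (by omega), hroot]
    · rw [factor_get? h1 hjn (by omega), show i + (m * p + r) = e + 1 by omega, hc]

theorem lpar_eq (h1 : 1 < i) (h2 : i ≤ w.length) (hb : i + p - 1 ≤ w.length)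
    (hLyn : IsLyndon (cpar w i) (factor w i (i + p - 1)))
    (hub : ∀ j, i + p - 1 < j → j ≤ w.length → ¬ IsLyndon (cpar w i) (factor w i j)) :
    Lpar w i = i + p - 1 := by
  obtain ⟨_, _, _, hmax⟩ := lpar_facts (by omega : 1 ≤ i) h2
  have hge := hmax (i + p - 1) hb hLyn
  have hle : Lpar w i ≤ i + p - 1 := by
    have hmem2 : i + p - 1 ∈ {j | j ≤ w.length ∧ IsLyndon (cpar w i) (factor w i j)} :=
      ⟨hb, hLyn⟩
    apply csSup_le ⟨_, hmem2⟩
    intro j hj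
    by_contra hjgt
    push_neg at hjgt
    exact hub j hjgt hj.1 hj.2
  omega

theorem lyndon_last_wAt (hi : 1 ≤ i) (h2' : i + p - 1 ≤ w.length) (hp2 : 2 ≤ p)
    (hLyn : IsLyndon c (factor w i (i + p - 1))) : wAt w (i + p - 1) = !c := by
  have hlen : (factor w i (i + p - 1)).length = p := by rw [factor_length hi h2']; omega
  have hlast := lyndon_get_last hLyn (by rw [hlen]; omega)
  rw [hlen, factor_get? hi h2' (by omega)] at hlast
  have hval := Option.some.inj hlast
  rw [show i + (p - 1) = i + p - 1 by omega] at hval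
  exact hval

theorem cpar_of_lyndon (h1 : 1 < i) (hb : i + p - 1 ≤ w.length) (hs1 : 1 ≤ s)
    (hsi : s < i) (hipe : i + p ≤ e + 1) (hp2 : 2 ≤ p) (hPer : PerOn w s e p)
    (hLyn : IsLyndon c (factor w i (i + p - 1))) : cpar w i = c := by
  have hlast := lyndon_last_wAt (by omega) hb hp2 hLyn
  have hper1 : wAt w (i - 1) = wAt w (i - 1 + p) := hPer (i - 1) (by omega) (by omega)
  rw [cpar_eq, hper1, show i - 1 + p = i + p - 1 by omega, hlast, Bool.not_not]

end LexDev

open LexDev in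
/-- Characterization of the preimages of an interval `[s..e]` in the range
of `R_w`. -/
theorem Rmap_preimage_characterization (w : List Bool) (s e p : ℕ)
    (hrange : ∃ k, 1 < k ∧ k ≤ w.length ∧ Rmap w k = (s, e))
    (hp : IsLeastPeriod (factor w s e) p)
    (i : ℕ) (h1 : 1 < i) (h2 : i ≤ w.length) :
    Rmap w i = (s, e) ↔
      (e < w.length ∧ s < i ∧ i + p ≤ e + 1 ∧
        IsLyndon (w.getD e false) (factor w i (i + p - 1))) ∨
      (e = w.length ∧ s < i ∧ i + p ≤ e + 1 ∧
        (IsLyndon false (factor w i (i + p - 1)) ∨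
         IsLyndon true (factor w i (i + p - 1)))) ∨
      (s = i ∧ e = w.length ∧ IsPeriod (factor w i e) 1) := by
  obtain ⟨k, hk1, hk2, hRk⟩ := hrange
  obtain ⟨hs1, hsk, hspe, hen, hp1, hPer, hML, hMR, _⟩ := run_facts hk1 hk2 hRk hp
  constructor
  · intro hR
    obtain ⟨_, hsi', _, _, _, _, _, _, hDp⟩ := run_facts h1 h2 hR hp
    obtain ⟨hiL, hLn, hLynL, hLmax⟩ := lpar_facts (by omega : 1 ≤ i) h2
    have hL : Lpar w i = i + p - 1 := by rw [Dpar] at hDp; omega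
    obtain ⟨hLE, hEn, _, _⟩ := epar_facts h1 h2
    have hE : Epar w i = e := congrArg Prod.snd hR
    rw [hE] at hLE hEn
    have hipe : i + p ≤ e + 1 := by omega
    have hLynv : IsLyndon (cpar w i) (factor w i (i + p - 1)) := by rw [← hL]; exact hLynL
    by_cases hecase : e < w.length
    · left
      have hsi : s < i := by
        rcases lt_or_eq_of_le hsi' with h | h
        · exact h
        exfalso
        have hml := hML (by omega)
        rw [show s - 1 = i - 1 by omega, show i - 1 + p = i + p - 1 by omega] at hml
        have hlastc : wAt w (i + p - 1) = cpar w i := by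
          rw [cpar_eq, Bool.eq_not_iff]
          exact fun hx => hml hx.symm
        by_cases hp2 : 2 ≤ p
        · have hlast := lyndon_last_wAt (by omega) (by omega) hp2 hLynv
          rw [hlastc] at hlast
          simp at hlast
        · have hp1' : p = 1 := by omega
          subst hp1'
          have hperie : PerOn w i e 1 := perOn_mono hPer (by omega) (le_refl e)
          have hmr := hMR hecase
          rw [show e + 1 - 1 = e by omega] at hmr
          have hie : wAt w i = wAt w e :=
            perOn_congr hperie (le_refl i) (by omega) (le_refl e) (one_dvd _)
          have hext : wAt w (e + 1) = !(cpar w i) := by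
            rw [Bool.eq_not_iff]
            intro hx
            apply hmr
            rw [show i + 1 - 1 = i by omega] at hlastc
            rw [← hie, hx]
            exact hlastc
          have hdv := duval_ext (by omega) (by omega) (by omega : i + 1 ≤ e + 1)
            (by omega) hLynv hperie (by
              rw [Nat.mod_one, show i + 0 = i + 1 - 1 by omega]
              exact hlastc) hext
          have := hLmax (e + 1) (by omega) hdv
          omega
      have hwc : wAt w (e + 1) = cpar w i := by
        rcases Bool.eq_or_eq_not (wAt w (e + 1)) (cpar w i) with h | h
        · exact h
        exfalso
        have hperie : PerOn w i e p := perOn_mono hPer (by omega) (le_refl e)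
        have hml2 : wAt w (i + (e + 1 - i) % p) = cpar w i := by
          rw [wAt_root_pos hperie hp1 (le_refl i) hipe]
          rcases Bool.eq_or_eq_not (wAt w (e + 1 - p)) (cpar w i) with h' | h'
          · exact h'
          exfalso
          exact hMR hecase (by rw [h', h])
        have hdv := duval_ext (by omega) hp1 hipe (by omega) hLynv hperie hml2 h
        have := hLmax (e + 1) (by omega) hdv
        omega
      refine ⟨hecase, hsi, hipe, ?_⟩
      rw [getD_eq_wAt, hwc]
      exact hLynv
    · push_neg at hecase
      have he : e = w.length := le_antisymm hEn hecase
      rcases lt_or_eq_of_le hsi' with hsi | hsi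
      · right; left
        refine ⟨he, hsi, hipe, ?_⟩
        cases hcc : cpar w i with
        | false => left; rw [← hcc]; exact hLynv
        | true => right; rw [← hcc]; exact hLynv
      · right; right
        have hml := hML (by omega)
        rw [show s - 1 = i - 1 by omega, show i - 1 + p = i + p - 1 by omega] at hml
        have hlastc : wAt w (i + p - 1) = cpar w i := by
          rw [cpar_eq, Bool.eq_not_iff]
          exact fun hx => hml hx.symm
        have hp1' : p = 1 := by
          by_contra hp2'
          have hp2 : 2 ≤ p := by omega
          have hlast := lyndon_last_wAt (by omega) (by omega) hp2 hLynv
          rw [hlastc] at hlast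
          simp at hlast
        refine ⟨hsi, he, ?_⟩
        refine (isPeriod_factor_iff (by omega) hen).2 ⟨le_refl 1, ?_⟩
        rw [← hp1']
        exact perOn_mono hPer (by omega) (le_refl e)
  · intro hRHS
    rcases hRHS with ⟨he, hsi, hipe, hLyn⟩ | ⟨he, hsi, hipe, hLyn⟩ | ⟨hsie, he, hper1⟩
    · rw [getD_eq_wAt] at hLyn
      have hb : i + p - 1 ≤ w.length := by omega
      have hc : cpar w i = wAt w (e + 1) := by
        by_cases hp2 : 2 ≤ p
        · exact cpar_of_lyndon h1 hb hs1 hsi hipe hp2 hPer hLyn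
        · have hp1' : p = 1 := by omega
          subst hp1'
          have hie : wAt w i = wAt w e :=
            perOn_congr hPer (by omega) (by omega) (le_refl e) (one_dvd _)
          have hmr := hMR he
          rw [show e + 1 - 1 = e by omega] at hmr
          have hi1 : wAt w (i - 1) = wAt w i := by
            have hx := hPer (i - 1) (by omega) (by omega)
            rw [show i - 1 + 1 = i by omega] at hx
            exact hx
          rw [cpar_eq, hi1, hie, eq_comm, Bool.eq_not_iff]
          exact Ne.symm hmr
      have hLynC : IsLyndon (cpar w i) (factor w i (i + p - 1)) := by rw [hc]; exact hLyn
      have hub := not_lyndon_long (c := cpar w i) (by omega) hs1 hp1 hPer (by omega) hipe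
        (fun _ => ⟨hc.symm, hMR he⟩)
      have hL := lpar_eq h1 h2 hb hLynC hub
      exact ste_eq h1 h2 hs1 hen hp1 hPer hML hMR (by omega) hipe hL
    · have hb : i + p - 1 ≤ w.length := by omega
      have hLynC : IsLyndon (cpar w i) (factor w i (i + p - 1)) := by
        by_cases hp2 : 2 ≤ p
        · rcases hLyn with h | h
          · rw [cpar_of_lyndon h1 hb hs1 hsi hipe hp2 hPer h]; exact h
          · rw [cpar_of_lyndon h1 hb hs1 hsi hipe hp2 hPer h]; exact h
        · have hp1' : p = 1 := by omega
          rw [hp1', show i + 1 - 1 = i by omega, factor_single (by omega) h2]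
          exact lyndon_singleton _ _
      have hub := not_lyndon_long (c := cpar w i) (by omega) hs1 hp1 hPer (by omega) hipe
        (fun hlt => absurd hlt (by omega))
      have hL := lpar_eq h1 h2 hb hLynC hub
      exact ste_eq h1 h2 hs1 hen hp1 hPer hML hMR (by omega) hipe hL
    · have hp1'' : p = 1 := le_antisymm (hp.2 1 (by rw [hsie]; exact hper1)) hp1
      have hipe : i + p ≤ e + 1 := by omega
      have hb : i + p - 1 ≤ w.length := by omega
      have hLynC : IsLyndon (cpar w i) (factor w i (i + p - 1)) := by
        rw [hp1'', show i + 1 - 1 = i by omega, factor_single (by omega) h2]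
        exact lyndon_singleton _ _
      have hub := not_lyndon_long (c := cpar w i) (by omega) hs1 hp1 hPer (by omega) hipe
        (fun hlt => absurd hlt (by omega))
      have hL := lpar_eq h1 h2 hb hLynC hub
      exact ste_eq h1 h2 hs1 hen hp1 hPer hML hMR (by omega) hipe hL
end

section
/- For every binary word y of length n ≥ 2, the number of runs of y of the form [1..j] (runs starting at the first position of y) is strictly less than log_φ n, where φ = (1+√5)/2 is the golden ratio. (Any two distinct runs of y starting at position 1 give prefix squares of y whose primitive roots are distinct.) -/
namespace PrefixRunsAux

def Per (f : ℕ → Bool) (m p : ℕ) : Prop := ∀ k, k + p < m → f k = f (k + p)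

lemma Per.mono {f : ℕ → Bool} {m m' p : ℕ} (h : Per f m p) (hm : m' ≤ m) : Per f m' p :=
  fun k hk => h k (lt_of_lt_of_le hk hm)

lemma per_add_mul {f : ℕ → Bool} {m p : ℕ} (h : Per f m p) :
    ∀ (t k : ℕ), k + t * p < m → f k = f (k + t * p) := by
  intro t
  induction t with
  | zero => intro k hk; simp
  | succ t ih =>
    intro k hk
    have e1 : k + (t + 1) * p = (k + p) + t * p := by rw [Nat.succ_mul]; ring
    rw [e1] at hk ⊢
    have h1 : f k = f (k + p) := h k (by omega)
    rw [h1]; exact ih (k + p) hk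

lemma per_mod {f : ℕ → Bool} {m p : ℕ} (h : Per f m p) {x : ℕ} (hx : x < m) :
    f x = f (x % p) := by
  have hxe : x % p + x / p * p = x := Nat.mod_add_div' x p
  have h2 := per_add_mul h (x / p) (x % p) (by rw [hxe]; exact hx)
  rw [hxe] at h2
  exact h2.symm

lemma per_congr {f : ℕ → Bool} {m p : ℕ} (h : Per f m p) {x y : ℕ}
    (hx : x < m) (hy : y < m) (hxy : x % p = y % p) : f x = f y := by
  rw [per_mod h hx, per_mod h hy, hxy]


lemma per_gcd_aux : ∀ b : ℕ, ∀ (a m : ℕ) (f : ℕ → Bool), 0 < a → a ≤ b → a + b ≤ m →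
    Per f m a → Per f m b → Per f m (Nat.gcd a b) := by
  intro b
  induction b using Nat.strong_induction_on with
  | _ b ih =>
    intro a m f ha hab hm hpa hpb
    rcases eq_or_lt_of_le hab with heq | hlt
    · subst heq; rwa [Nat.gcd_self]
    · set c := b - a with hc
      have hc0 : 0 < c := by omega
      have hpc : Per f (m - a) c := by
        intro k hk
        have h1 : f k = f (k + b) := hpb k (by omega)
        have h2 : f (k + c) = f (k + c + a) := hpa (k + c) (by omega)
        have e : k + c + a = k + b := by omega
        rw [e] at h2
        exact h1.trans h2.symm
      have hpa' : Per f (m - a) a := hpa.mono (by omega)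
      have hgcd : Nat.gcd a c = Nat.gcd a b := by
        conv_rhs => rw [show b = c + a by omega]
        rw [Nat.gcd_add_self_right]
      have hrec : Per f (m - a) (Nat.gcd a b) := by
        rw [← hgcd]
        rcases le_total a c with h1 | h1
        · exact ih c (by omega) a (m - a) f ha h1 (by omega) hpa' hpc
        · rw [Nat.gcd_comm]
          exact ih a hlt c (m - a) f hc0 h1 (by omega) hpc hpa'
      set g := Nat.gcd a b with hg
      have hga : g ∣ a := Nat.gcd_dvd_left a b
      have hgb : g ∣ b := Nat.gcd_dvd_right a b
      have hgle : g ≤ a := Nat.le_of_dvd ha hga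
      intro k hk
      by_cases hcase : k + g < m - a
      · exact hrec k hcase
      · have hgdvd : g ∣ b - a := Nat.dvd_sub hgb hga
        have hgba : g ≤ b - a := Nat.le_of_dvd (by omega) hgdvd
        have hka : a ≤ k := by omega
        have h1 : f (k - a) = f k := by
          have := hpa (k - a) (by omega)
          rwa [Nat.sub_add_cancel hka] at this
        have h2 : f (k - a + g) = f (k + g) := by
          have := hpa (k - a + g) (by omega)
          have e : k - a + g + a = k + g := by omega
          rwa [e] at this
        have h3 : f (k - a) = f (k - a + g) := hrec (k - a) (by omega)
        rw [← h1, h3, h2]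

lemma per_gcd {f : ℕ → Bool} {m a b : ℕ} (ha : 0 < a) (hb : 0 < b) (hm : a + b ≤ m)
    (hpa : Per f m a) (hpb : Per f m b) : Per f m (Nat.gcd a b) := by
  rcases le_total a b with h | h
  · exact per_gcd_aux b a m f ha h hm hpa hpb
  · rw [Nat.gcd_comm]
    exact per_gcd_aux a b m f hb h (by omega) hpb hpa


lemma per_lift {f : ℕ → Bool} {m p g : ℕ} (hp : 0 < p) (hdvd : g ∣ p)
    (hmp : Per f m p) (hpg : Per f p g) : Per f m g := by
  intro k hk
  have hkm : k < m := lt_of_le_of_lt (Nat.le_add_right k g) hk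
  have h1 : f k = f (k % p) := per_mod hmp hkm
  have h2 : f (k + g) = f ((k + g) % p) := per_mod hmp hk
  rw [h1, h2]
  apply per_congr hpg (Nat.mod_lt _ hp) (Nat.mod_lt _ hp)
  rw [Nat.mod_mod_of_dvd _ hdvd, Nat.mod_mod_of_dvd _ hdvd, Nat.add_mod_right]

/-- Bezout step: some natural multiple of `e` is congruent to `gcd d e` mod `d`. -/
lemma exists_mul_mod (d e : ℕ) (hd : 0 < d) : ∃ c : ℕ, (c * e) % d = (Nat.gcd d e) % d := by
  have hbez : (Nat.gcd d e : ℤ) = d * Nat.gcdA d e + e * Nat.gcdB d e := Nat.gcd_eq_gcd_ab d e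
  set y : ℤ := Nat.gcdB d e with hy
  refine ⟨(y % (d : ℤ)).toNat, ?_⟩
  have hd' : (0 : ℤ) < d := by exact_mod_cast hd
  have hnn : 0 ≤ y % (d : ℤ) := Int.emod_nonneg y (by omega)
  have hcast : (((y % (d : ℤ)).toNat : ℤ)) = y % (d : ℤ) := Int.toNat_of_nonneg hnn
  have key : (((y % (d : ℤ)).toNat * e : ℕ) : ℤ) % d = ((Nat.gcd d e : ℕ) : ℤ) % d := by
    push_cast
    rw [hcast]
    have h1 : (y % (d:ℤ)) * e ≡ y * e [ZMOD d] := Int.ModEq.mul_right e (Int.emod_emod_of_dvd y dvd_rfl)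
    calc (y % (d:ℤ) * (e:ℤ)) % d = (y * e) % d := h1
      _ = ((d : ℤ) * Nat.gcdA d e + e * y) % d := by
          rw [show (d : ℤ) * Nat.gcdA d e + e * y = y * e + d * Nat.gcdA d e by ring,
            Int.add_mul_emod_self_left]
      _ = ((Nat.gcd d e : ℕ) : ℤ) % d := by rw [← hbez]
  exact_mod_cast key

/-- The window/residue argument: if `f` has period `d` on `[0,p)` and satisfies the
shift relation `f k = f (k - e)` on a window of length `b ≥ d`, then `f` has period
`gcd d e` on `[0,p)`. -/
lemma per_window {f : ℕ → Bool} {p d e b : ℕ} (hd : 0 < d) (he : 0 < e) (hdb : d ≤ b)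
    (hp : e + b ≤ p) (hper : Per f p d)
    (hw : ∀ k, e ≤ k → k < e + b → f k = f (k - e)) :
    Per f p (Nat.gcd d e) := by
  -- base: f j = f ((j + e) % d) for j < d
  have base : ∀ j, j < d → f j = f ((j + e) % d) := by
    intro j hj
    have h1 : f (e + j) = f j := by
      have := hw (e + j) (by omega) (by omega)
      simpa using this
    have h2 : f (e + j) = f ((e + j) % d) := per_mod hper (by omega)
    rw [← h1, h2]
    congr 1
    rw [Nat.add_comm]
  -- iterate
  have iter : ∀ c : ℕ, ∀ j, j < d → f j = f ((j + c * e) % d) := by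
    intro c
    induction c with
    | zero => intro j hj; simp [Nat.mod_eq_of_lt hj]
    | succ c ih =>
      intro j hj
      have h1 : f j = f ((j + e) % d) := base j hj
      have h2 : f ((j + e) % d) = f (((j + e) % d + c * e) % d) := ih _ (Nat.mod_lt _ hd)
      have h3 : ((j + e) % d + c * e) % d = (j + (c + 1) * e) % d := by
        conv_rhs => rw [show j + (c + 1) * e = (j + e) + c * e by ring]
        rw [Nat.add_mod, Nat.mod_mod_of_dvd, ← Nat.add_mod]
        exact dvd_rfl
      rw [h1, h2, h3]
  obtain ⟨c, hc⟩ := exists_mul_mod d e hd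
  set g := Nat.gcd d e with hg
  have hgd : g ∣ d := Nat.gcd_dvd_left d e
  have hg0 : 0 < g := Nat.gcd_pos_of_pos_left e hd
  -- Per f d g
  have hPdg : Per f d g := by
    intro j hj
    have h1 : f j = f ((j + c * e) % d) := iter c j (by omega)
    have h2 : (j + c * e) % d = (j + g) % d := by
      rw [Nat.add_mod, hc, ← Nat.add_mod]
    have h3 : (j + g) % d = j + g := Nat.mod_eq_of_lt hj
    rw [h1, h2, h3]
  exact per_lift hd hgd hper hPdg


/-- Abstract data of a run starting at position 1 (0-based formulation). -/
structure RunAt (f : ℕ → Bool) (n : ℕ) (P J : ℕ) : Prop where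
  hP : 0 < P
  hJ2 : 2 * P ≤ J
  hJn : J ≤ n
  per : Per f J P
  least : ∀ Q, 0 < Q → Per f J Q → P ≤ Q
  bdry : J < n → f J ≠ f (J - P)

lemma RunAt.J_lt_J {f : ℕ → Bool} {n P J Q J' : ℕ} (h1 : RunAt f n P J)
    (h2 : RunAt f n Q J') (hPQ : P < Q) : J < J' := by
  by_contra hle
  push_neg at hle
  have : Q ≤ P := h2.least P h1.hP (h1.per.mono hle)
  omega

lemma RunAt.P_lt_P {f : ℕ → Bool} {n P J Q J' : ℕ} (h1 : RunAt f n P J)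
    (h2 : RunAt f n Q J') (hJJ : J < J') : P < Q := by
  rcases lt_trichotomy P Q with h | h | h
  · exact h
  · exfalso
    subst h
    have hb : f J ≠ f (J - P) := h1.bdry (lt_of_lt_of_le hJJ h2.hJn)
    have hper : f (J - P) = f (J - P + P) := h2.per (J - P) (by have := h1.hJ2; omega)
    rw [Nat.sub_add_cancel (by have := h1.hJ2; omega)] at hper
    exact hb hper.symm
  · exact absurd (h2.J_lt_J h1 h) (by omega)

/-- The three-run lemma: Fibonacci-type growth of least periods of runs at position 1. -/
lemma three_runs {f : ℕ → Bool} {n p Jp q Jq r Jr : ℕ}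
    (hp : RunAt f n p Jp) (hq : RunAt f n q Jq) (hr : RunAt f n r Jr)
    (hpq : p < q) (hqr : q < r) : p + q ≤ r := by
  by_contra hcon
  push_neg at hcon
  -- notation
  have hJpq : Jp < Jq := hp.J_lt_J hq hpq
  have hJqr : Jq < Jr := hq.J_lt_J hr hqr
  set s := r - q with hs
  set d := q - p with hd
  have hs1 : 1 ≤ s := by omega
  have hsp : s ≤ p - 1 := by omega
  have hd1 : 1 ≤ d := by omega
  have hp2 : 2 ≤ p := by omega
  -- F1 : Jp < p + q
  have F1 : Jp < p + q := by
    by_contra hF1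
    push_neg at hF1
    have hb : f Jp ≠ f (Jp - p) := hp.bdry (by have := hr.hJn; omega)
    have e1 : f (Jp - q) = f Jp := by
      have := hq.per (Jp - q) (by omega)
      rwa [Nat.sub_add_cancel (by omega)] at this
    have e2 : f (Jp - p - q) = f (Jp - q) := by
      have := hp.per (Jp - p - q) (by omega)
      rwa [show Jp - p - q + p = Jp - q by omega] at this
    have e3 : f (Jp - p - q) = f (Jp - p) := by
      have := hq.per (Jp - p - q) (by omega)
      rwa [show Jp - p - q + q = Jp - p by omega] at this
    exact hb (by rw [← e1, ← e2, e3])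
  set m0 := Jq - q with hm0
  have hm0q : q ≤ m0 := by have := hq.hJ2; omega
  -- F4 : Per f m0 s
  have F4 : Per f m0 s := by
    intro k hk
    have e1 : f k = f (k + r) := by
      have := hr.per k (by omega)
      rwa [show k + r = k + r by rfl] at this
    have e2 : f (k + s) = f (k + r) := by
      have := hq.per (k + s) (by omega)
      rwa [show k + s + q = k + r by omega] at this
    rw [e1, e2]
  -- case m0 ≥ Jp : s is a small period of the p-run prefix
  have hm0Jp : m0 < Jp := by
    by_contra hge
    push_neg at hge
    have := hp.least s (by omega) (F4.mono hge)
    omega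
  -- case p + s ≤ m0
  have hm0ps : m0 < p + s := by
    by_contra hge
    push_neg at hge
    have hPm0p : Per f m0 p := hp.per.mono (by omega)
    have hg := per_gcd (show 0 < p by omega) (show 0 < s by omega) (by omega) hPm0p F4
    set g := Nat.gcd p s with hgdef
    have hgp : g ∣ p := Nat.gcd_dvd_left p s
    have hgs : g ∣ s := Nat.gcd_dvd_right p s
    have hg0 : 0 < g := Nat.gcd_pos_of_pos_left s (by omega)
    have hgles : g ≤ s := Nat.le_of_dvd (by omega) hgs
    -- extend g-period to [0, Jp)
    have hext : Per f Jp g := by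
      intro k hk
      by_cases hcase : k + g < m0
      · exact hg k hcase
      · have hka : p ≤ k := by omega
        have e1 : f (k - p) = f k := by
          have := hp.per (k - p) (by omega)
          rwa [Nat.sub_add_cancel hka] at this
        have e2 : f (k - p + g) = f (k + g) := by
          have := hp.per (k - p + g) (by omega)
          rwa [show k - p + g + p = k + g by omega] at this
        have e3 : f (k - p) = f (k - p + g) := hg (k - p) (by omega)
        rw [← e1, e3, e2]
    have := hp.least g hg0 hext
    omega
  set e := p - s with he
  set b := m0 - p with hb
  have he1 : 1 ≤ e := by omega
  have hbd : d ≤ b := by omega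
  have hebp : e + b ≤ p := by omega
  -- u has period d on [0, p)
  have hud : Per f p d := by
    intro k hk
    have e1 : f k = f (k + q) := hq.per k (by have := hq.hJ2; omega)
    have e2 : f (k + d) = f (k + q) := by
      have := hp.per (k + d) (by have := hp.hJ2; omega)
      rwa [show k + d + p = k + q by omega] at this
    rw [e1, e2]
  -- window relation
  have hw : ∀ k, e ≤ k → k < e + b → f k = f (k - e) := by
    intro k hk1 hk2
    have e1 : f k = f (k + s) := F4 k (by omega)
    have e2 : f (k - e) = f (k + s) := by
      have := hp.per (k - e) (by omega)
      rwa [show k - e + p = k + s by omega] at this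
    rw [e1, ← e2]
  have hA := per_window (show 0 < d by omega) (show 0 < e by omega) hbd hebp hud hw
  set A := Nat.gcd d e with hAdef
  have hAe : A ∣ e := Nat.gcd_dvd_right d e
  have hA0 : 0 < A := Nat.gcd_pos_of_pos_left e (by omega)
  have hAle : A ≤ e := Nat.le_of_dvd (by omega) hAe
  -- FW on [0, p) with periods A and s
  have hus : Per f p s := F4.mono (by omega)
  have hG := per_gcd hA0 (show 0 < s by omega) (by omega) hA hus
  set G := Nat.gcd A s with hGdef
  have hGA : G ∣ A := Nat.gcd_dvd_left A s
  have hGs : G ∣ s := Nat.gcd_dvd_right A s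
  have hG0 : 0 < G := Nat.gcd_pos_of_pos_left s hA0
  have hGp : G ∣ p := by
    have hGe : G ∣ e := hGA.trans hAe
    have : G ∣ e + s := Nat.dvd_add hGe hGs
    rwa [show e + s = p by omega] at this
  have hfinal : Per f Jp G := per_lift (show 0 < p by omega) hGp hp.per hG
  have := hp.least G hG0 hfinal
  have hGle : G ≤ A := Nat.le_of_dvd hA0 hGA
  omega


/-! ### Bridge to list definitions and the final counting argument -/

/-- The letter function of a word. -/
def fw (y : List Bool) : ℕ → Bool := fun k => (y[k]?).getD false

lemma get?_eq_fw {y : List Bool} {k : ℕ} (hk : k < y.length) : y[k]? = some (fw y k) := by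
  rw [fw, List.getElem?_eq_getElem hk]
  rfl

lemma factor_one (y : List Bool) (j : ℕ) : factor y 1 j = y.take j := by
  simp [factor]

lemma isPeriod_take_iff {y : List Bool} {j p : ℕ} (hj : j ≤ y.length) :
    IsPeriod (y.take j) p ↔ 1 ≤ p ∧ Per (fw y) j p := by
  have hlen : (y.take j).length = j := by rw [List.length_take]; omega
  constructor
  · rintro ⟨h1, h2⟩
    refine ⟨h1, fun k hk => ?_⟩
    have hkj : k < j := by omega
    have := h2 k (by rw [hlen]; exact hk)
    rw [List.getElem?_take_of_lt hkj, List.getElem?_take_of_lt hk, get?_eq_fw (by omega),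
      get?_eq_fw (by omega)] at this
    exact Option.some_injective _ this
  · rintro ⟨h1, h2⟩
    refine ⟨h1, fun k hk => ?_⟩
    rw [hlen] at hk
    have hkj : k < j := by omega
    rw [List.getElem?_take_of_lt hkj, List.getElem?_take_of_lt hk, get?_eq_fw (by omega), get?_eq_fw (by omega)]
    exact congrArg some (h2 k hk)

lemma runAt_of_isRun {y : List Bool} {j : ℕ} (hrun : IsRun y 1 j) :
    RunAt (fw y) y.length (leastPeriod (factor y 1 j)) j := by
  obtain ⟨-, h1j, hjn, h2per, -, hbdry⟩ := hrun
  rw [factor_one] at *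
  set P := leastPeriod (y.take j) with hP
  have hne : {p | IsPeriod (y.take j) p}.Nonempty := by
    refine ⟨j, ?_⟩
    refine ⟨by omega, fun k hk => ?_⟩
    exfalso
    have : (y.take j).length ≤ j := by rw [List.length_take]; omega
    omega
  have hmem : IsPeriod (y.take j) P := Nat.sInf_mem hne
  have hPper := (isPeriod_take_iff hjn).mp hmem
  refine ⟨by omega, by omega, hjn, hPper.2, ?_, ?_⟩
  · intro Q hQ0 hQper
    exact Nat.sInf_le ((isPeriod_take_iff hjn).mpr ⟨hQ0, hQper⟩)
  · intro hlt hcontra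
    rcases hbdry with heq | hne2
    · omega
    · apply hne2
      rw [get?_eq_fw hlt, get?_eq_fw (by omega)]
      exact congrArg some hcontra

end PrefixRunsAux

/-- A word of length `n ≥ 2` has fewer than `log_φ n` runs starting at its
first position. -/
theorem prefix_runs_lt_log (y : List Bool) (h : 2 ≤ y.length) :
    ({j : ℕ | IsRun y 1 j}.ncard : ℝ) < Real.logb goldenRatio' y.length := by
  classical
  set S := {j : ℕ | IsRun y 1 j} with hS
  have hsub : S ⊆ Set.Iic y.length := fun j hj => hj.2.2.1
  have hfin : S.Finite := (Set.finite_Iic y.length).subset hsub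
  set k := S.ncard with hk
  have hkey : 2 * Nat.fib (k + 1) ≤ y.length := by
    rcases Nat.eq_zero_or_pos k with hk0 | hkpos
    · rw [hk0]
      have hf1 : Nat.fib (0 + 1) = 1 := rfl
      omega
    · have hcard : hfin.toFinset.card = k := (Set.ncard_eq_toFinset_card S hfin).symm
      set σ := hfin.toFinset.orderIsoOfFin hcard with hσ
      set J : Fin k → ℕ := fun i => (σ i : ℕ) with hJ
      have hJrun : ∀ i, IsRun y 1 (J i) := by
        intro i
        have h2 := (σ i).2
        rw [Set.Finite.mem_toFinset] at h2
        exact h2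
      set P : Fin k → ℕ := fun i => leastPeriod (factor y 1 (J i)) with hPdef
      have hrunAt : ∀ i, PrefixRunsAux.RunAt (PrefixRunsAux.fw y) y.length (P i) (J i) :=
        fun i => PrefixRunsAux.runAt_of_isRun (hJrun i)
      have hJmono : ∀ i i' : Fin k, i < i' → J i < J i' := by
        intro i i' hii
        exact Subtype.coe_lt_coe.mpr (σ.strictMono hii)
      have hPmono : ∀ i i' : Fin k, i < i' → P i < P i' := fun i i' hii =>
        PrefixRunsAux.RunAt.P_lt_P (hrunAt i) (hrunAt i') (hJmono i i' hii)
      have hfib : ∀ m : ℕ, ∀ hm : m < k, Nat.fib (m + 2) ≤ P ⟨m, hm⟩ := by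
        intro m
        induction m using Nat.strong_induction_on with
        | _ m ih =>
          intro hm
          match m, hm with
          | 0, hm =>
            have hf2 : Nat.fib (0 + 2) = 1 := rfl
            have := (hrunAt ⟨0, hm⟩).hP
            omega
          | 1, hm =>
            have hf3 : Nat.fib (1 + 2) = 2 := rfl
            have h0 : P ⟨0, by omega⟩ < P ⟨1, hm⟩ :=
              hPmono _ _ (Fin.mk_lt_mk.mpr (by omega))
            have := (hrunAt ⟨0, by omega⟩).hP
            omega
          | (m+2), hm =>
            have h1 : Nat.fib (m + 2) ≤ P ⟨m, by omega⟩ := ih m (by omega) (by omega)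
            have h2 : Nat.fib (m + 3) ≤ P ⟨m + 1, by omega⟩ := ih (m+1) (by omega) (by omega)
            have h3 := PrefixRunsAux.three_runs (hrunAt ⟨m, by omega⟩)
              (hrunAt ⟨m+1, by omega⟩) (hrunAt ⟨m+2, hm⟩)
              (hPmono _ _ (Fin.mk_lt_mk.mpr (by omega)))
              (hPmono _ _ (Fin.mk_lt_mk.mpr (by omega)))
            have hfibeq : Nat.fib (m + 2 + 2) = Nat.fib (m + 2) + Nat.fib (m + 3) :=
              Nat.fib_add_two
            omega
      have hlast := hfib (k - 1) (by omega)
      have e1 : k - 1 + 2 = k + 1 := by omega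
      rw [e1] at hlast
      have h2J := (hrunAt ⟨k-1, by omega⟩).hJ2
      have hJn := (hrunAt ⟨k-1, by omega⟩).hJn
      omega
  have hs5 : Real.sqrt 5 ^ 2 = 5 := Real.sq_sqrt (by norm_num)
  have hs5a : 1 < Real.sqrt 5 := by nlinarith [Real.sqrt_nonneg 5]
  have hs5b : Real.sqrt 5 < 3 := by nlinarith [Real.sqrt_nonneg 5]
  have hphi1 : 1 < goldenRatio' := by rw [goldenRatio']; linarith
  have hphi2 : goldenRatio' < 2 := by rw [goldenRatio']; linarith
  have hsq : goldenRatio' ^ 2 = goldenRatio' + 1 := by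
    rw [goldenRatio']; field_simp; nlinarith [hs5]
  have hpow : ∀ m : ℕ, goldenRatio' ^ m < 2 * (Nat.fib (m+1) : ℝ) := by
    intro m
    induction m using Nat.strong_induction_on with
    | _ m ih =>
      match m with
      | 0 =>
        have hf1 : Nat.fib 1 = 1 := rfl
        rw [hf1]; norm_num
      | 1 =>
        have hf2 : Nat.fib 2 = 1 := rfl
        rw [hf2, pow_one]; push_cast; linarith
      | (m+2) =>
        have h1 := ih m (by omega)
        have h2 := ih (m+1) (by omega)
        have e : goldenRatio' ^ (m+2) = goldenRatio' ^ (m+1) + goldenRatio' ^ m := by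
          have e0 : goldenRatio' ^ (m+2) = goldenRatio' ^ m * goldenRatio' ^ 2 := by ring
          rw [e0, hsq]; ring
        have efib : (Nat.fib (m+2+1) : ℝ) = Nat.fib (m+1) + Nat.fib (m+1+1) := by
          rw [show m + 2 + 1 = (m+1) + 2 by ring, Nat.fib_add_two]; push_cast; ring
        rw [e, efib]; linarith
  have hn0 : (0:ℝ) < (y.length:ℝ) := by exact_mod_cast (by omega : 0 < y.length)
  rw [Real.lt_logb_iff_rpow_lt hphi1 hn0, Real.rpow_natCast]
  calc goldenRatio' ^ k < 2 * (Nat.fib (k+1) : ℝ) := hpow k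
    _ ≤ y.length := by exact_mod_cast hkey
end
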